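/- arXiv:0909.5590 — 7 statements merged into one kernel-verified Lean document; each statement's English description precedes it below -/
import Mathlib

section
/- Let B be a category admitting equalisers, G = (G, δ, ε) a comonad on a category A, and F : B → A a functor with right adjoint R (unit η : Id → RF, counit σ : FR → Id). Suppose there is a functor F̄ : B → A^G with U^G ∘ F̄ = F, with associated left G-comodule structure β : F → GF and comonad morphism t = Gσ ∘ βR : FR → G, and let R̄ : A^G → B be the right adjoint of F̄ (which exists since B has equalisers), with counit ε̄ : F̄R̄ → Id. Then the following are equivalent: (a) t : FR → G is an isomorphism (F is G-Galois); (b) the composite φ^G σ ∘ η^G F̄R : F̄R → φ^G is an isomorphism, where η^G : Id → φ^G U^G is the unit of the adjunction U^G ⊣ φ^G; (c) F̄ restricts to an equivalence of categories Inj(F, B) → Inj(U^G, A^G); (d) for every object (a, θ_a) of Inj(U^G, A^G), the component ε̄_{(a,θ_a)} is an isomorphism; (e) for every object a of A, the component ε̄_{φ^G(a)} = ε̄_{(G(a), δ_a)} is an isomorphism. -/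
open CategoryTheory CategoryTheory.Limits

namespace Paper

variable {A : Type*} [Category A] {B : Type*} [Category B]

/-- A left `G`-comodule structure `β : F ⟶ GF` on a functor `F : B ⥤ A`. -/
structure ComoduleStruct (G : Comonad A) (F : B ⥤ A) where
  β : F ⟶ F ⋙ (G : A ⥤ A)
  counit : ∀ b : B, β.app b ≫ G.ε.app (F.obj b) = 𝟙 (F.obj b)
  coassoc : ∀ b : B, β.app b ≫ G.δ.app (F.obj b) = β.app b ≫ (G : A ⥤ A).map (β.app b)

/-- The lifting `F̄ : B ⥤ A^G` of a `G`-comodule functor `(F, β)`, satisfying `U^G ∘ F̄ = F`. -/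
@[simps]
def ComoduleStruct.lift {G : Comonad A} {F : B ⥤ A} (c : ComoduleStruct G F) :
    B ⥤ G.Coalgebra where
  obj b :=
    { A := F.obj b
      a := c.β.app b
      counit := c.counit b
      coassoc := c.coassoc b }
  map f :=
    { f := F.map f
      h := (c.β.naturality f).symm }

/-- The comonad morphism `t = Gσ ∘ βR : FR ⟶ G` associated with a `G`-comodule functor `F`
with right adjoint `R` (counit `σ`). -/
def ComoduleStruct.galoisHom {G : Comonad A} {F : B ⥤ A} (c : ComoduleStruct G F)
    (R : A ⥤ B) (adj : F ⊣ R) : R ⋙ F ⟶ (G : A ⥤ A) :=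
  Functor.whiskerLeft R c.β ≫ Functor.whiskerRight adj.counit (G : A ⥤ A) ≫ (Functor.leftUnitor _).hom

/-- An object `b` is `F`-injective if any morphism out of `b₁` which becomes a split
monomorphism under `F` allows extension of morphisms `b₁ ⟶ b`. -/
def FInjective (F : B ⥤ A) (b : B) : Prop :=
  ∀ ⦃b₁ b₂ : B⦄ (f : b₁ ⟶ b₂) (g : b₁ ⟶ b), IsSplitMono (F.map f) → ∃ h : b₂ ⟶ b, f ≫ h = g

/-- The composite `φ^G σ ∘ η^G F̄R : F̄R ⟶ φ^G` (condition (b)). -/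
def ComoduleStruct.cofreeComparison {G : Comonad A} {F : B ⥤ A} (c : ComoduleStruct G F)
    (R : A ⥤ B) (adj : F ⊣ R) : R ⋙ c.lift ⟶ G.cofree :=
  Functor.whiskerLeft (R ⋙ c.lift) G.adj.unit ≫ Functor.whiskerRight adj.counit G.cofree

-- ## auxiliary lemmas
section Aux
variable {G : Comonad A} {F : B ⥤ A} (c : ComoduleStruct G F) (R : A ⥤ B) (adj : F ⊣ R)

lemma cofreeComparison_app_f (a : A) :
    ((c.cofreeComparison R adj).app a).f = (c.galoisHom R adj).app a := by
  simp [ComoduleStruct.cofreeComparison, ComoduleStruct.galoisHom, Comonad.adj_unit]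
  rfl

variable {Rbar : G.Coalgebra ⥤ B} (adj' : c.lift ⊣ Rbar)

/-- canonical iso `R ≅ cofree ⋙ Rbar` by uniqueness of right adjoints. -/
noncomputable def uIso : R ≅ G.cofree ⋙ Rbar :=
  Adjunction.rightAdjointUniq adj (adj'.comp G.adj)

lemma comparison_factor (a : A) :
    (c.cofreeComparison R adj).app a =
      c.lift.map ((uIso c R adj adj').hom.app a) ≫ adj'.counit.app (G.cofree.obj a) := by
  apply (G.adj.homEquiv _ _).symm.injective
  rw [G.adj.homEquiv_counit, G.adj.homEquiv_counit]
  have h1 : G.forget.map ((c.cofreeComparison R adj).app a) ≫ G.ε.app a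
      = adj.counit.app a := by
    show ((c.cofreeComparison R adj).app a).f ≫ G.ε.app a = _
    rw [cofreeComparison_app_f]
    simp [ComoduleStruct.galoisHom]
    show (c.β.app (R.obj a) ≫ (G : A ⥤ A).map (adj.counit.app a)) ≫ G.ε.app a = _
    rw [Category.assoc]
    erw [G.ε.naturality, Functor.id_map, ← Category.assoc, c.counit (R.obj a),
      Category.id_comp]
  have h2 := Adjunction.rightAdjointUniq_hom_app_counit adj (adj'.comp G.adj) a
  rw [Adjunction.comp_counit_app] at h2
  simp only [Comonad.adj_counit] at h2 ⊢
  rw [h1]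
  show _ = G.forget.map (c.lift.map ((uIso c R adj adj').hom.app a) ≫
      adj'.counit.app (G.cofree.obj a)) ≫ G.ε.app a
  rw [← h2]
  simp [uIso]
  exact (Category.assoc _ _ _).symm


lemma iso_one_iff_two :
    IsIso (c.galoisHom R adj) ↔ IsIso (c.cofreeComparison R adj) := by
  rw [NatTrans.isIso_iff_isIso_app, NatTrans.isIso_iff_isIso_app]
  refine forall_congr' fun a => ?_
  constructor
  · intro h
    have : IsIso ((c.cofreeComparison R adj).app a).f := by
      rw [cofreeComparison_app_f]; exact h
    exact Comonad.coalgebra_iso_of_iso G _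
  · intro h
    rw [← cofreeComparison_app_f]
    exact inferInstanceAs (IsIso (G.forget.map ((c.cofreeComparison R adj).app a)))

lemma iso_two_iff_five :
    IsIso (c.cofreeComparison R adj) ↔
      ∀ a : A, IsIso (adj'.counit.app (G.cofree.obj a)) := by
  rw [NatTrans.isIso_iff_isIso_app]
  refine forall_congr' fun a => ?_
  rw [comparison_factor c R adj adj' a]
  constructor
  · intro h
    exact IsIso.of_isIso_comp_left (c.lift.map ((uIso c R adj adj').hom.app a)) _
  · intro h
    infer_instance

lemma finjective_of_retract (H : B ⥤ A) {b b' : B} (i : b ⟶ b') (r : b' ⟶ b)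
    (hir : i ≫ r = 𝟙 b) (hb' : FInjective H b') : FInjective H b := by
  intro b₁ b₂ f g hf
  obtain ⟨h, hh⟩ := hb' f (g ≫ i) hf
  exact ⟨h ≫ r, by rw [← Category.assoc, hh, Category.assoc, hir, Category.comp_id]⟩

lemma finjective_rightAdjoint {H : B ⥤ A} {K : A ⥤ B} (adjh : H ⊣ K) (a : A) :
    FInjective H (K.obj a) := by
  intro b₁ b₂ f g hf
  refine ⟨(adjh.homEquiv _ _) (retraction (H.map f) ≫ (adjh.homEquiv _ _).symm g), ?_⟩
  rw [← Adjunction.homEquiv_naturality_left, ← Category.assoc, IsSplitMono.id,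
    Category.id_comp, Equiv.apply_symm_apply]

lemma isIso_app_of_retract (T : B ⥤ B) (τ : T ⟶ 𝟭 B) {X Y : B} (i : X ⟶ Y) (r : Y ⟶ X)
    (hir : i ≫ r = 𝟙 X) (hY : IsIso (τ.app Y)) : IsIso (τ.app X) := by
  refine ⟨i ≫ inv (τ.app Y) ≫ T.map r, ?_, ?_⟩
  · have := τ.naturality i
    simp only [Functor.id_map] at this
    rw [← Category.assoc, ← this, Category.assoc, IsIso.hom_inv_id_assoc,
      ← T.map_comp, hir, T.map_id]
  · have := τ.naturality r
    simp only [Functor.id_map] at this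
    slice_lhs 3 4 => rw [this]
    simp [hir]

/-- The canonical bijection `(b ⟶ R a) ≃ (F̄ b ⟶ φ a)`. -/
noncomputable def homEquivE (b : B) (a : A) :
    (b ⟶ R.obj a) ≃ (c.lift.obj b ⟶ G.cofree.obj a) :=
  (adj.homEquiv b a).symm.trans (G.adj.homEquiv (c.lift.obj b) a)

lemma homEquivE_apply {b : B} {a : A} (f : b ⟶ R.obj a) :
    homEquivE c R adj b a f = c.lift.map f ≫ (c.cofreeComparison R adj).app a := by
  ext1
  show ((G.adj.homEquiv (c.lift.obj b) a) ((adj.homEquiv b a).symm f)).f = _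
  rw [Comonad.Coalgebra.comp_f, cofreeComparison_app_f]
  simp only [Adjunction.homEquiv_unit, Adjunction.homEquiv_counit, Comonad.adj_unit]
  erw [Adjunction.homEquiv_unit, Comonad.Coalgebra.comp_f, Comonad.adj_unit]
  show c.β.app b ≫ (G : A ⥤ A).map (F.map f ≫ adj.counit.app a) = _
  have hnat : F.map f ≫ c.β.app (R.obj a) = c.β.app b ≫ G.map (F.map f) :=
    c.β.naturality f
  rw [Functor.map_comp, ← Category.assoc, ← hnat]
  simp [ComoduleStruct.galoisHom]
  exact ((Category.assoc _ _ _).symm.trans (congrArg (· ≫ _) hnat.symm)).trans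
    (Category.assoc _ _ _)


/-- The structure map of a coalgebra, as a coalgebra morphism into the cofree coalgebra. -/
def thetaHom {G : Comonad A} (X : G.Coalgebra) : X ⟶ G.cofree.obj X.A :=
  { f := X.a
    h := X.coassoc.symm }

lemma isSplitMono_forget_thetaHom {G : Comonad A} (X : G.Coalgebra) :
    IsSplitMono (G.forget.map (thetaHom X)) :=
  IsSplitMono.mk' ⟨G.ε.app X.A, X.counit⟩

lemma five_imp_four (h5 : ∀ a : A, IsIso (adj'.counit.app (G.cofree.obj a))) :
    ∀ X : G.Coalgebra, FInjective G.forget X → IsIso (adj'.counit.app X) := by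
  intro X hX
  obtain ⟨q, hq⟩ := hX (thetaHom X) (𝟙 X) (isSplitMono_forget_thetaHom X)
  exact isIso_app_of_retract _ adj'.counit (thetaHom X) q hq (h5 X.A)

lemma retract_unit {b : B} (hb : FInjective F b) :
    ∃ r : R.obj (F.obj b) ⟶ b, adj.unit.app b ≫ r = 𝟙 b := by
  obtain ⟨r, hr⟩ := hb (adj.unit.app b) (𝟙 b)
    (IsSplitMono.mk' ⟨adj.counit.app (F.obj b), adj.left_triangle_components b⟩)
  exact ⟨r, hr⟩

lemma liftmap_bijective (h2 : IsIso (c.cofreeComparison R adj)) {b b' : B}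
    (hb' : FInjective F b') :
    Function.Bijective (fun f : b ⟶ b' => c.lift.map f) := by
  obtain ⟨r, hr⟩ := retract_unit R adj hb'
  haveI := h2
  set w := (c.cofreeComparison R adj).app (F.obj b') with hw
  haveI : IsIso w := inferInstance
  have key : ∀ f : b ⟶ b', c.lift.map (f ≫ adj.unit.app b') ≫ w =
      c.lift.map f ≫ c.lift.map (adj.unit.app b') ≫ w := by
    intro f; rw [Functor.map_comp, Category.assoc]
  constructor
  · intro f g hfg
    have h1 : homEquivE c R adj b (F.obj b') (f ≫ adj.unit.app b') =
        homEquivE c R adj b (F.obj b') (g ≫ adj.unit.app b') := by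
      rw [homEquivE_apply, homEquivE_apply, key, key]
      simp only at hfg
      rw [hfg]
    have h2' := (homEquivE c R adj b (F.obj b')).injective h1
    calc f = f ≫ adj.unit.app b' ≫ r := by rw [hr, Category.comp_id]
    _ = g ≫ adj.unit.app b' ≫ r := by
        rw [← Category.assoc, ← Category.assoc, h2']
    _ = g := by rw [hr, Category.comp_id]
  · intro ψ
    set u := (homEquivE c R adj b (F.obj b')).symm (ψ ≫ c.lift.map (adj.unit.app b') ≫ w)
      with hu
    have h1 : c.lift.map u ≫ w = ψ ≫ c.lift.map (adj.unit.app b') ≫ w := by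
      rw [← homEquivE_apply, hu, Equiv.apply_symm_apply]
    have h1' : c.lift.map u = ψ ≫ c.lift.map (adj.unit.app b') := by
      rw [← cancel_mono w, h1, Category.assoc]
    refine ⟨u ≫ r, ?_⟩
    show c.lift.map (u ≫ r) = ψ
    rw [Functor.map_comp, h1', Category.assoc, ← Functor.map_comp, hr,
      CategoryTheory.Functor.map_id, Category.comp_id]

lemma two_imp_finj (h2 : IsIso (c.cofreeComparison R adj)) :
    ∀ b : B, FInjective F b → FInjective G.forget (c.lift.obj b) := by
  intro b hb
  obtain ⟨r, hr⟩ := retract_unit R adj hb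
  haveI := h2
  set w := (c.cofreeComparison R adj).app (F.obj b) with hw
  haveI : IsIso w := inferInstance
  refine finjective_of_retract G.forget
    (c.lift.map (adj.unit.app b) ≫ w) (inv w ≫ c.lift.map r) ?_
    (finjective_rightAdjoint G.adj (F.obj b))
  rw [Category.assoc, IsIso.hom_inv_id_assoc, ← Functor.map_comp, hr,
    CategoryTheory.Functor.map_id]


lemma two_imp_three [HasEqualizers B] (h2 : IsIso (c.cofreeComparison R adj)) :
    (ObjectProperty.lift (FInjective G.forget)
      (ObjectProperty.ι (FInjective F) ⋙ c.lift)
      (fun X => two_imp_finj c R adj h2 X.obj X.property)).IsEquivalence := by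
  haveI := h2
  set L := ObjectProperty.lift (FInjective G.forget)
      (ObjectProperty.ι (FInjective F) ⋙ c.lift)
      (fun X => two_imp_finj c R adj h2 X.obj X.property) with hLdef
  haveI : L.Faithful :=
    ⟨fun {X Y} {f g} hfg => InducedCategory.hom_ext
      ((liftmap_bijective c R adj h2 Y.property).1 (congrArg (fun k => k.hom) hfg))⟩
  haveI : L.Full :=
    ⟨fun {X Y} ψ => ⟨ObjectProperty.homMk ((liftmap_bijective c R adj h2 Y.property).2 ψ.hom).choose,
      InducedCategory.hom_ext ((liftmap_bijective c R adj h2 Y.property).2 ψ.hom).choose_spec⟩⟩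
  haveI : L.EssSurj := by
    refine ⟨fun X => ?_⟩
    obtain ⟨q, hq⟩ := X.property (thetaHom X.obj) (𝟙 X.obj) (isSplitMono_forget_thetaHom X.obj)
    haveI : IsIso ((c.cofreeComparison R adj).app X.obj.A) := inferInstance
    set w := (c.cofreeComparison R adj).app X.obj.A with hw
    set i₀ : X.obj ⟶ c.lift.obj (R.obj X.obj.A) := thetaHom X.obj ≫ inv w with hi₀
    set r₀ : c.lift.obj (R.obj X.obj.A) ⟶ X.obj := w ≫ q with hr₀
    have hir : i₀ ≫ r₀ = 𝟙 X.obj := by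
      rw [hi₀, hr₀, Category.assoc, IsIso.inv_hom_id_assoc, hq]
    obtain ⟨ebar, hebar⟩ :=
      (liftmap_bijective c R adj h2 (finjective_rightAdjoint adj X.obj.A)).2 (r₀ ≫ i₀)
    replace hebar : c.lift.map ebar = r₀ ≫ i₀ := hebar
    have hidem : ebar ≫ ebar = ebar := by
      apply (liftmap_bijective c R adj h2 (finjective_rightAdjoint adj X.obj.A)).1
      show c.lift.map (ebar ≫ ebar) = c.lift.map ebar
      rw [Functor.map_comp, hebar, Category.assoc, reassoc_of% hir]
    haveI : IsIdempotentComplete B :=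
      (Idempotents.isIdempotentComplete_iff_hasEqualizer_of_id_and_idempotent B).2
        (fun _ _ _ => inferInstance)
    obtain ⟨Yb, iY, eY, hie, hei⟩ := IsIdempotentComplete.idempotents_split _ ebar hidem
    have hYb : FInjective F Yb :=
      finjective_of_retract F iY eY hie (finjective_rightAdjoint adj X.obj.A)
    refine ⟨⟨Yb, hYb⟩, ⟨(ObjectProperty.ι _).preimageIso ?_⟩⟩
    have hiee : iY ≫ ebar ≫ eY = 𝟙 Yb := by
      rw [← hei]
      simp only [Category.assoc]
      rw [reassoc_of% hie, hie]
    refine ⟨c.lift.map iY ≫ r₀, i₀ ≫ c.lift.map eY, ?_, ?_⟩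
    · calc (c.lift.map iY ≫ r₀) ≫ i₀ ≫ c.lift.map eY
          = c.lift.map iY ≫ (r₀ ≫ i₀) ≫ c.lift.map eY := by simp only [Category.assoc]
        _ = c.lift.map iY ≫ c.lift.map ebar ≫ c.lift.map eY := by rw [hebar]
        _ = c.lift.map (iY ≫ ebar ≫ eY) := by simp only [Functor.map_comp]
        _ = 𝟙 _ := by rw [hiee, CategoryTheory.Functor.map_id]
    · calc (i₀ ≫ c.lift.map eY) ≫ c.lift.map iY ≫ r₀
          = i₀ ≫ c.lift.map (eY ≫ iY) ≫ r₀ := by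
            simp only [Category.assoc, Functor.map_comp]
        _ = i₀ ≫ (r₀ ≫ i₀) ≫ r₀ := by rw [hei, hebar]
        _ = 𝟙 _ := by
            simp only [Category.assoc]
            rw [reassoc_of% hir, hir]
  exact {}


lemma three_imp_two (h : ∀ b : B, FInjective F b → FInjective G.forget (c.lift.obj b))
    (hL : (ObjectProperty.lift (FInjective G.forget)
      (ObjectProperty.ι (FInjective F) ⋙ c.lift)
      (fun X => h X.obj X.property)).IsEquivalence) :
    IsIso (c.cofreeComparison R adj) := by
  set L := ObjectProperty.lift (FInjective G.forget)
      (ObjectProperty.ι (FInjective F) ⋙ c.lift)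
      (fun X => h X.obj X.property) with hLdef
  haveI := hL.full
  haveI := hL.essSurj
  rw [NatTrans.isIso_iff_isIso_app]
  intro a
  set T : ObjectProperty.FullSubcategory (FInjective G.forget) :=
    ⟨G.cofree.obj a, finjective_rightAdjoint G.adj a⟩ with hT
  have ι := L.objObjPreimageIso T
  have ι' : c.lift.obj (L.objPreimage T).obj ≅ G.cofree.obj a :=
    (ObjectProperty.ι _).mapIso ι
  set g₀ := (homEquivE c R adj (L.objPreimage T).obj a).symm ι'.hom with hg₀
  have hg : c.lift.map g₀ ≫ (c.cofreeComparison R adj).app a = ι'.hom := by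
    rw [← homEquivE_apply, hg₀, Equiv.apply_symm_apply]
  set k : G.cofree.obj a ⟶ c.lift.obj (R.obj a) := ι'.inv ≫ c.lift.map g₀ with hk
  have hkw : k ≫ (c.cofreeComparison R adj).app a = 𝟙 _ := by
    rw [hk, Category.assoc, hg, Iso.inv_hom_id]
  obtain ⟨⟨v⟩, hv⟩ := L.map_surjective
    (show L.obj ⟨R.obj a, finjective_rightAdjoint adj a⟩ ⟶
        L.obj ⟨R.obj a, finjective_rightAdjoint adj a⟩ from
      ObjectProperty.homMk ((c.cofreeComparison R adj).app a ≫ k))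
  replace hv : c.lift.map v = (c.cofreeComparison R adj).app a ≫ k :=
    congrArg (fun k => k.hom) hv
  have hv' : homEquivE c R adj (R.obj a) a v = homEquivE c R adj (R.obj a) a (𝟙 (R.obj a)) := by
    rw [homEquivE_apply, homEquivE_apply, hv, CategoryTheory.Functor.map_id, Category.id_comp,
      Category.assoc, hkw, Category.comp_id]
  have hv1 : v = 𝟙 (R.obj a) := (homEquivE c R adj (R.obj a) a).injective hv'
  have hwk : (c.cofreeComparison R adj).app a ≫ k = 𝟙 _ := by
    rw [← hv, hv1, CategoryTheory.Functor.map_id]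
    rfl
  exact ⟨k, hwk, hkw⟩

end Aux

/-- **Characterization of `G`-Galois comodule functors** (Theorem 1.11).
Let `B` admit equalisers, `G` a comonad on `A`, `F : B ⥤ A` with right adjoint `R`,
`F̄ : B ⥤ A^G` the lifting of a `G`-comodule structure on `F`, and `R̄` the right adjoint of
`F̄` (with counit `ε̄`).  Then the following are equivalent:
(a) the comonad morphism `t : FR ⟶ G` is an isomorphism (`F` is `G`-Galois);
(b) the composite `φ^G σ ∘ η^G F̄R : F̄R ⟶ φ^G` is an isomorphism;
(c) `F̄` restricts to an equivalence `Inj(F, B) ≃ Inj(U^G, A^G)`;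
(d) `ε̄` is an isomorphism on every `U^G`-injective object of `A^G`;
(e) `ε̄_{φ^G(a)}` is an isomorphism for every `a : A`. -/
theorem statement0 [HasEqualizers B] (G : Comonad A) (F : B ⥤ A) (R : A ⥤ B)
    (adj : F ⊣ R) (c : ComoduleStruct G F)
    (Rbar : G.Coalgebra ⥤ B) (adj' : c.lift ⊣ Rbar) :
    List.TFAE
      [ IsIso (c.galoisHom R adj),
        IsIso (c.cofreeComparison R adj),
        ∃ h : ∀ b : B, FInjective F b → FInjective G.forget (c.lift.obj b),
          (ObjectProperty.lift (FInjective G.forget)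
            (ObjectProperty.ι (FInjective F) ⋙ c.lift)
            (fun X => h X.obj X.property)).IsEquivalence,
        ∀ X : G.Coalgebra, FInjective G.forget X → IsIso (adj'.counit.app X),
        ∀ a : A, IsIso (adj'.counit.app (G.cofree.obj a)) ] := by

  tfae_have 1 ↔ 2 := iso_one_iff_two c R adj
  tfae_have 2 ↔ 5 := iso_two_iff_five c R adj adj'
  tfae_have 5 → 4 := five_imp_four c adj'
  tfae_have 4 → 5 := fun h4 a => h4 _ (finjective_rightAdjoint G.adj a)
  tfae_have 2 → 3 := fun h2 => ⟨two_imp_finj c R adj h2, two_imp_three c R adj h2⟩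
  tfae_have 3 → 2 := fun h3 => three_imp_two c R adj h3.choose h3.choose_spec
  tfae_finish

end Paper
end

section
/- Let B be a category admitting coequalisers of reflexive pairs, T = (T, m, e) a monad on a category A, and R : B → A a functor with left adjoint F : A → B (unit η : Id → RF, counit ε : FR → Id). Suppose there is a functor R̄ : B → A_T with U_T ∘ R̄ = R, with associated left T-module structure α : TR → R and monad morphism t = αF ∘ Tη : T → RF, and let L̄ : A_T → B be the left adjoint of R̄ (which exists since B has coequalisers of reflexive pairs), with unit η̄ : Id → R̄L̄. Then the following are equivalent: (a) t : T → RF is an isomorphism (R is T-Galois); (b) the composite ε_T R̄F ∘ φ_T η : φ_T → R̄F is an isomorphism, where ε_T : φ_T U_T → Id is the counit of the adjunction φ_T ⊣ U_T; (c) R̄ restricts to an equivalence of categories Proj(R, B) → Proj(U_T, A_T); (d) for every object (a, h_a) of Proj(U_T, A_T), the component η̄_{(a,h_a)} is an isomorphism; (e) for every object a of A, the component η̄_{φ_T(a)} = η̄_{(T(a), m_a)} is an isomorphism. -/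
open CategoryTheory CategoryTheory.Limits

namespace Paper

variable {A : Type*} [Category A] {B : Type*} [Category B]

/-- A left `T`-module structure `α : TR ⟶ R` on a functor `R : B ⥤ A`. -/
structure ModuleStruct (T : Monad A) (R : B ⥤ A) where
  α : R ⋙ (T : A ⥤ A) ⟶ R
  unit : ∀ b : B, T.η.app (R.obj b) ≫ α.app b = 𝟙 (R.obj b)
  assoc : ∀ b : B, T.μ.app (R.obj b) ≫ α.app b = (T : A ⥤ A).map (α.app b) ≫ α.app b

/-- The lifting `R̄ : B ⥤ A_T` of a `T`-module functor `(R, α)`, satisfying `U_T ∘ R̄ = R`. -/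
@[simps]
def ModuleStruct.lift {T : Monad A} {R : B ⥤ A} (c : ModuleStruct T R) :
    B ⥤ T.Algebra where
  obj b :=
    { A := R.obj b
      a := c.α.app b
      unit := c.unit b
      assoc := c.assoc b }
  map f :=
    { f := R.map f
      h := c.α.naturality f }

/-- The monad morphism `t = αF ∘ Tη : T ⟶ RF` associated with a `T`-module functor `R`
with left adjoint `F` (unit `η`). -/
def ModuleStruct.galoisHom {T : Monad A} {R : B ⥤ A} (c : ModuleStruct T R)
    (F : A ⥤ B) (adj : F ⊣ R) : (T : A ⥤ A) ⟶ F ⋙ R :=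
  (Functor.leftUnitor _).inv ≫ Functor.whiskerRight adj.unit (T : A ⥤ A) ≫ Functor.whiskerLeft F c.α

/-- An object `b` is `R`-projective if any morphism into `b₂` which becomes a split
epimorphism under `R` allows lifting of morphisms `b ⟶ b₂`. -/
def FProjective (R : B ⥤ A) (b : B) : Prop :=
  ∀ ⦃b₁ b₂ : B⦄ (f : b₁ ⟶ b₂) (g : b ⟶ b₂), IsSplitEpi (R.map f) → ∃ h : b ⟶ b₁, h ≫ f = g

/-- The composite `ε_T R̄F ∘ φ_T η : φ_T ⟶ R̄F` (condition (b)). -/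
def ModuleStruct.freeComparison {T : Monad A} {R : B ⥤ A} (c : ModuleStruct T R)
    (F : A ⥤ B) (adj : F ⊣ R) : T.free ⟶ F ⋙ c.lift :=
  Functor.whiskerRight adj.unit T.free ≫ Functor.whiskerLeft (F ⋙ c.lift) T.adj.counit

/-- A retract of an `R`-projective object is `R`-projective. -/
lemma FProjective.of_retract {R : B ⥤ A} {b b' : B} (i : b ⟶ b') (r : b' ⟶ b)
    (hir : i ≫ r = 𝟙 b) (hb' : FProjective R b') : FProjective R b := by
  intro b₁ b₂ f g hf
  obtain ⟨h, hh⟩ := hb' f (r ≫ g) hf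
  exact ⟨i ≫ h, by rw [Category.assoc, hh, ← Category.assoc, hir, Category.id_comp]⟩

/-- If `F ⊣ R`, every object `F a` is `R`-projective. -/
lemma fprojective_of_left_adjoint {R : B ⥤ A} {F : A ⥤ B} (adj : F ⊣ R) (a : A) :
    FProjective R (F.obj a) := by
  intro b₁ b₂ f g hf
  refine ⟨(adj.homEquiv a b₁).symm (adj.homEquiv a b₂ g ≫ section_ (R.map f)), ?_⟩
  rw [← Adjunction.homEquiv_naturality_right_symm, Category.assoc, IsSplitEpi.id,
    Category.comp_id, Equiv.symm_apply_apply]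

/-- If `X` is a retract of `Y` and a natural transformation `θ` is invertible at `Y`,
then it is invertible at `X`. -/
lemma isIso_app_of_retract_s1 {C : Type*} [Category C] {D : Type*} [Category D]
    {S G : C ⥤ D} (θ : S ⟶ G) {X Y : C} (i : X ⟶ Y) (r : Y ⟶ X) (hir : i ≫ r = 𝟙 X)
    (hY : IsIso (θ.app Y)) : IsIso (θ.app X) := by
  refine ⟨⟨G.map i ≫ inv (θ.app Y) ≫ S.map r, ?_, ?_⟩⟩
  · rw [← Category.assoc, ← θ.naturality, Category.assoc, IsIso.hom_inv_id_assoc,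
      ← S.map_comp, hir, S.map_id]
  · rw [Category.assoc, Category.assoc, θ.naturality, IsIso.inv_hom_id_assoc,
      ← G.map_comp, hir, G.map_id]

/-- **Characterization of `T`-Galois module functors** (Theorem 1.15).
Let `B` admit coequalisers of reflexive pairs, `T` a monad on `A`, `R : B ⥤ A` a
`T`-module functor with left adjoint `F`, `R̄ : B ⥤ A_T` its lifting and `L̄` a left adjoint
of `R̄` (with unit `η̄`).  Then the following are equivalent:
(a) the monad morphism `t : T ⟶ RF` is an isomorphism (`R` is `T`-Galois);
(b) the composite `ε_T R̄F ∘ φ_T η : φ_T ⟶ R̄F` is an isomorphism;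
(c) `R̄` restricts to an equivalence `Proj(R, B) ≃ Proj(U_T, A_T)`;
(d) `η̄` is an isomorphism on every `U_T`-projective object of `A_T`;
(e) `η̄_{φ_T(a)}` is an isomorphism for every `a : A`. -/
theorem statement1 [HasReflexiveCoequalizers B] (T : Monad A) (R : B ⥤ A) (F : A ⥤ B)
    (adj : F ⊣ R) (c : ModuleStruct T R)
    (Lbar : T.Algebra ⥤ B) (adj' : Lbar ⊣ c.lift) :
    List.TFAE
      [ IsIso (c.galoisHom F adj),
        IsIso (c.freeComparison F adj),
        ∃ h : ∀ b : B, FProjective R b → FProjective T.forget (c.lift.obj b),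
          (ObjectProperty.lift (FProjective T.forget)
            (ObjectProperty.ι (FProjective R) ⋙ c.lift)
            (fun X => h X.obj X.property)).IsEquivalence,
        ∀ X : T.Algebra, FProjective T.forget X → IsIso (adj'.unit.app X),
        ∀ a : A, IsIso (adj'.unit.app (T.free.obj a)) ] := by
  classical
  let comp : T.free ⋙ Lbar ⊣ R := T.adj.comp adj'
  let J : T.free ⋙ Lbar ≅ F := comp.leftAdjointUniq adj
  -- the underlying morphism of the free comparison is the Galois morphism
  have hfc_f : ∀ a : A, ((c.freeComparison F adj).app a).f
      = (T : A ⥤ A).map (adj.unit.app a) ≫ c.α.app (F.obj a) := by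
    intro a
    show (T.free.map (adj.unit.app a)).f ≫ (T.adj.counit.app (c.lift.obj (F.obj a))).f = _
    simp [ModuleStruct.freeComparison, Monad.adj, Adjunction.mkOfHomEquiv,
      Adjunction.mk'_homEquiv]
    erw [Category.id_comp]
    rfl
  have hgal : ∀ a : A, (c.galoisHom F adj).app a
      = (T : A ⥤ A).map (adj.unit.app a) ≫ c.α.app (F.obj a) := by
    intro a
    simp [ModuleStruct.galoisHom]
  -- key comparison (K1): the free comparison factors through the unit `η̄` via the
  -- canonical isomorphism `L̄ ∘ φ_T ≅ F` of left adjoints of `R`.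
  have hK1 : ∀ a : A, (c.freeComparison F adj).app a
      = adj'.unit.app (T.free.obj a) ≫ c.lift.map (J.hom.app a) := by
    intro a
    have key : (adj'.homEquiv (T.free.obj a) (F.obj a)).symm ((c.freeComparison F adj).app a)
        = (comp.leftAdjointUniq adj).hom.app a := by
      apply (comp.homEquiv a (F.obj a)).injective
      rw [Adjunction.homEquiv_leftAdjointUniq_hom_app]
      show ((T.adj.comp adj').homEquiv a (F.obj a)) _ = _
      rw [Adjunction.comp_homEquiv]
      show ((adj'.homEquiv (T.free.obj a) (F.obj a)).trans
        (T.adj.homEquiv a (c.lift.obj (F.obj a))))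
        ((adj'.homEquiv (T.free.obj a) (F.obj a)).symm ((c.freeComparison F adj).app a)) = _
      rw [Equiv.trans_apply, Equiv.apply_symm_apply]
      have heq : ∀ (X : T.Algebra) (f : T.free.obj a ⟶ X),
          T.adj.homEquiv a X f = T.η.app a ≫ f.f := by
        intro X f
        simp [Monad.adj, Adjunction.mkOfHomEquiv, Adjunction.mk'_homEquiv]
        rfl
      rw [heq]
      rw [hfc_f a]
      show T.η.app a ≫ (T : A ⥤ A).map (adj.unit.app a) ≫ c.α.app (F.obj a) = _
      rw [← Category.assoc]
      show (T.η.app a ≫ (T : A ⥤ A).map (adj.unit.app a)) ≫ _ = _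
      rw [← T.η.naturality, Category.assoc]
      simp only [Functor.comp_obj, Functor.id_map]
      rw [c.unit (F.obj a)]
      simp
    have h2 := (Equiv.symm_apply_eq (adj'.homEquiv (T.free.obj a) (F.obj a))).mp key
    rw [h2, Adjunction.homEquiv_unit]
  -- forget of the counit of the Eilenberg–Moore adjunction is the structure map
  have hcounit_f : ∀ X : T.Algebra, (T.adj.counit.app X).f = X.a := by
    intro X
    simp [Monad.adj, Adjunction.mkOfHomEquiv, Adjunction.mk'_homEquiv]
    exact Category.id_comp _
  -- free algebras are `U_T`-projective
  have hfreeproj : ∀ a : A, FProjective T.forget (T.free.obj a) :=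
    fun a => fprojective_of_left_adjoint T.adj a
  -- every `U_T`-projective algebra is a retract of a free one
  have hretr : ∀ X : T.Algebra, FProjective T.forget X →
      ∃ i : X ⟶ T.free.obj X.A, i ≫ T.adj.counit.app X = 𝟙 X := by
    intro X hX
    have hsplit : IsSplitEpi (T.forget.map (T.adj.counit.app X)) := by
      refine IsSplitEpi.mk' ⟨T.η.app X.A, ?_⟩
      show T.η.app X.A ≫ (T.adj.counit.app X).f = 𝟙 _
      rw [hcounit_f X]
      exact X.unit
    obtain ⟨i, hi⟩ := hX (T.adj.counit.app X) (𝟙 X) hsplit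
    exact ⟨i, hi⟩
  -- `L̄` carries `U_T`-projectives to `R`-projectives (no hypotheses needed)
  have hLproj : ∀ X : T.Algebra, FProjective T.forget X → FProjective R (Lbar.obj X) := by
    intro X hX
    obtain ⟨i, hi⟩ := hretr X hX
    have h1 : FProjective R (Lbar.obj (T.free.obj X.A)) :=
      FProjective.of_retract (J.hom.app X.A) (J.inv.app X.A) (J.hom_inv_id_app X.A)
        (fprojective_of_left_adjoint adj X.A)
    exact FProjective.of_retract (Lbar.map i) (Lbar.map (T.adj.counit.app X))
      (by erw [← Lbar.map_comp, hi, Lbar.map_id]) h1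
  -- `R` applied to the counit of `L̄ ⊣ R̄` is always a split epimorphism
  have hRsplit : ∀ b : B, IsSplitEpi (R.map (adj'.counit.app b)) := by
    intro b
    refine IsSplitEpi.mk' ⟨(adj'.unit.app (c.lift.obj b)).f, ?_⟩
    have h := adj'.right_triangle_components b
    exact congrArg Monad.Algebra.Hom.f h
  -- `R` applied to the counit of `F ⊣ R` is a split epimorphism
  have hRsplit2 : ∀ b : B, IsSplitEpi (R.map (adj.counit.app b)) :=
    fun b => IsSplitEpi.mk' ⟨adj.unit.app (R.obj b), adj.right_triangle_components b⟩
  -- (1) ↔ (2)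
  have e12 : IsIso (c.galoisHom F adj) ↔ IsIso (c.freeComparison F adj) := by
    rw [NatTrans.isIso_iff_isIso_app, NatTrans.isIso_iff_isIso_app]
    refine forall_congr' fun a => ?_
    constructor
    · intro h
      have hf : IsIso ((c.freeComparison F adj).app a).f := by
        rw [hfc_f a, ← hgal a]; exact h
      exact Monad.algebra_iso_of_iso T _
    · intro h
      have hf : IsIso (T.forget.map ((c.freeComparison F adj).app a)) := inferInstance
      have hf' : IsIso ((c.freeComparison F adj).app a).f := hf
      rw [hgal a, ← hfc_f a]
      exact hf'
  -- (2) ↔ (5)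
  have e25 : IsIso (c.freeComparison F adj) ↔
      (∀ a : A, IsIso (adj'.unit.app (T.free.obj a))) := by
    rw [NatTrans.isIso_iff_isIso_app]
    refine forall_congr' fun a => ?_
    rw [hK1 a]
    constructor
    · intro h
      exact @IsIso.of_isIso_comp_right _ _ _ _ _ (adj'.unit.app (T.free.obj a))
        (c.lift.map (J.hom.app a)) inferInstance h
    · intro h
      exact @IsIso.comp_isIso _ _ _ _ _ _ _ h inferInstance
  -- (5) → (4)
  have i54 : (∀ a : A, IsIso (adj'.unit.app (T.free.obj a))) →
      ∀ X : T.Algebra, FProjective T.forget X → IsIso (adj'.unit.app X) := by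
    intro h5 X hX
    obtain ⟨i, hi⟩ := hretr X hX
    exact isIso_app_of_retract_s1 adj'.unit i (T.adj.counit.app X) hi (h5 X.A)
  -- (2) together with (4) imply (3)
  have i23 : IsIso (c.freeComparison F adj) →
      (∀ X : T.Algebra, FProjective T.forget X → IsIso (adj'.unit.app X)) →
      ∃ h : ∀ b : B, FProjective R b → FProjective T.forget (c.lift.obj b),
        (ObjectProperty.lift (FProjective T.forget)
          (ObjectProperty.ι (FProjective R) ⋙ c.lift)
          (fun X => h X.obj X.property)).IsEquivalence := by
    intro h2 h4
    haveI := h2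
    have hfca : ∀ a : A, IsIso ((c.freeComparison F adj).app a) := fun a => inferInstance
    -- `R̄` preserves projectives
    have hpres : ∀ b : B, FProjective R b → FProjective T.forget (c.lift.obj b) := by
      intro b hb
      obtain ⟨i, hi⟩ := hb (adj.counit.app b) (𝟙 b) (hRsplit2 b)
      have p1 : FProjective T.forget (c.lift.obj (F.obj (R.obj b))) := by
        haveI := hfca (R.obj b)
        exact FProjective.of_retract (inv ((c.freeComparison F adj).app (R.obj b)))
          ((c.freeComparison F adj).app (R.obj b)) (IsIso.inv_hom_id _)
          (hfreeproj (R.obj b))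
      exact FProjective.of_retract (c.lift.map i) (c.lift.map (adj.counit.app b))
        (by rw [← c.lift.map_comp, hi, c.lift.map_id]) p1
    -- the counit of `L̄ ⊣ R̄` is invertible at projectives
    have hcounitiso : ∀ b : B, FProjective R b → IsIso (adj'.counit.app b) := by
      intro b hb
      obtain ⟨s, hs⟩ := hb (adj'.counit.app b) (𝟙 b) (hRsplit b)
      haveI h1 : IsIso (adj'.unit.app (c.lift.obj b)) := h4 _ (hpres b hb)
      have htri := adj'.left_triangle_components (c.lift.obj b)
      haveI : IsIso (Lbar.map (adj'.unit.app (c.lift.obj b)) ≫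
          adj'.counit.app (Lbar.obj (c.lift.obj b))) := by
        rw [htri]; exact IsIso.id _
      have h2' : IsIso (adj'.counit.app (Lbar.obj (c.lift.obj b))) :=
        IsIso.of_isIso_comp_left (Lbar.map (adj'.unit.app (c.lift.obj b)))
          (adj'.counit.app (Lbar.obj (c.lift.obj b)))
      exact isIso_app_of_retract_s1 adj'.counit s (adj'.counit.app b) hs h2'
    refine ⟨hpres, ?_⟩
    constructor
    · -- faithful
      refine ⟨fun {b b'} {f₁ f₂} hf => ?_⟩
      apply ObjectProperty.hom_ext (P := _)
      haveI := hcounitiso b.obj b.property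
      have keyf : ∀ f : b.obj ⟶ b'.obj, f = inv (adj'.counit.app b.obj) ≫
          Lbar.map (c.lift.map f) ≫ adj'.counit.app b'.obj := by
        intro f
        have hn : Lbar.map (c.lift.map f) ≫ adj'.counit.app b'.obj
            = adj'.counit.app b.obj ≫ f := by
          have := adj'.counit.naturality f
          simpa using this
        rw [hn, IsIso.inv_hom_id_assoc]
      have hf' : c.lift.map f₁.hom = c.lift.map f₂.hom := congrArg (fun k => k.hom) hf
      calc f₁.hom = inv (adj'.counit.app b.obj) ≫
            Lbar.map (c.lift.map f₁.hom) ≫ adj'.counit.app b'.obj := keyf f₁.hom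
        _ = inv (adj'.counit.app b.obj) ≫
            Lbar.map (c.lift.map f₂.hom) ≫ adj'.counit.app b'.obj := by rw [hf']
        _ = f₂.hom := (keyf f₂.hom).symm
    · -- full
      refine ⟨fun {b b'} g => ?_⟩
      haveI := hcounitiso b.obj b.property
      haveI : IsIso (c.lift.map (adj'.counit.app b.obj)) := inferInstance
      refine ⟨ObjectProperty.homMk (P := _) (inv (adj'.counit.app b.obj) ≫ Lbar.map g.hom ≫ adj'.counit.app b'.obj :
        b.obj ⟶ b'.obj), ?_⟩
      apply ObjectProperty.hom_ext (P := _)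
      let g₁ : c.lift.obj b.obj ⟶ c.lift.obj b'.obj := g.hom
      show c.lift.map (inv (adj'.counit.app b.obj) ≫ Lbar.map g₁ ≫ adj'.counit.app b'.obj) = g₁
      have hinv : c.lift.map (inv (adj'.counit.app b.obj))
          = adj'.unit.app (c.lift.obj b.obj) := by
        rw [Functor.map_inv]
        rw [← cancel_mono (c.lift.map (adj'.counit.app b.obj))]
        rw [IsIso.inv_hom_id, adj'.right_triangle_components]
        rfl
      rw [c.lift.map_comp, c.lift.map_comp, hinv]
      have hn : adj'.unit.app (c.lift.obj b.obj) ≫ c.lift.map (Lbar.map g₁)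
          = g₁ ≫ adj'.unit.app (c.lift.obj b'.obj) := by
        have hnat := adj'.unit.naturality g₁
        simpa using hnat.symm
      rw [← Category.assoc, hn, Category.assoc, adj'.right_triangle_components,
        Category.comp_id]
    · -- essentially surjective
      refine ⟨fun X => ?_⟩
      obtain ⟨u, hu1, hu2⟩ := (h4 X.obj X.property).out
      exact ⟨⟨Lbar.obj X.obj, hLproj X.obj X.property⟩,
        ⟨ObjectProperty.isoMk (P := _)
         { hom := u
           inv := adj'.unit.app X.obj
           hom_inv_id := hu2
           inv_hom_id := hu1 }⟩⟩
  -- (3) → (4)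
  have i34 : (∃ h : ∀ b : B, FProjective R b → FProjective T.forget (c.lift.obj b),
        (ObjectProperty.lift (FProjective T.forget)
          (ObjectProperty.ι (FProjective R) ⋙ c.lift)
          (fun X => h X.obj X.property)).IsEquivalence) →
      ∀ X : T.Algebra, FProjective T.forget X → IsIso (adj'.unit.app X) := by
    rintro ⟨h, hEq⟩ X hX
    obtain ⟨b, ⟨ψ⟩⟩ := hEq.essSurj.mem_essImage
      (⟨X, hX⟩ : ObjectProperty.FullSubcategory (FProjective T.forget))
    -- underlying isomorphism in `T.Algebra`
    let ψ' : c.lift.obj b.obj ≅ X :=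
      { hom := ψ.hom.hom
        inv := ψ.inv.hom
        hom_inv_id := ObjectProperty.isoHom_inv_id_hom (P := _) ψ
        inv_hom_id := ObjectProperty.isoInv_hom_id_hom (P := _) ψ }
    have hb0 : FProjective T.forget (c.lift.obj b.obj) := h b.obj b.property
    have hLb : FProjective R (Lbar.obj (c.lift.obj b.obj)) := hLproj _ hb0
    obtain ⟨s, hs⟩ := b.property (adj'.counit.app b.obj) (𝟙 b.obj) (hRsplit b.obj)
    obtain ⟨g', hg'⟩ := hEq.full.map_surjective
      (X := b) (Y := ⟨Lbar.obj (c.lift.obj b.obj), hLb⟩)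
      (ObjectProperty.homMk (P := _) (adj'.unit.app (c.lift.obj b.obj)))
    let g₀ : b.obj ⟶ Lbar.obj (c.lift.obj b.obj) := g'.hom
    have hg'' : c.lift.map g₀ = adj'.unit.app (c.lift.obj b.obj) := congrArg (fun k => k.hom) hg'
    have h1 : adj'.counit.app b.obj ≫ g₀ = 𝟙 (Lbar.obj (c.lift.obj b.obj)) := by
      have hn : Lbar.map (c.lift.map g₀) ≫ adj'.counit.app (Lbar.obj (c.lift.obj b.obj))
          = adj'.counit.app b.obj ≫ g₀ := by
        have hnat := adj'.counit.naturality g₀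
        simpa using hnat
      rw [← hn, hg'']
      exact adj'.left_triangle_components (c.lift.obj b.obj)
    have hgs : g₀ = s := by
      rw [← Category.id_comp g₀, ← hs, Category.assoc, h1]
      simp
    have h2 : g₀ ≫ adj'.counit.app b.obj = 𝟙 b.obj := by rw [hgs]; exact hs
    haveI hciso : IsIso (adj'.counit.app b.obj) := ⟨⟨g₀, h1, h2⟩⟩
    haveI : IsIso (c.lift.map (adj'.counit.app b.obj)) := inferInstance
    haveI h3 : IsIso (adj'.unit.app (c.lift.obj b.obj)) := by
      haveI : IsIso (adj'.unit.app (c.lift.obj b.obj) ≫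
          c.lift.map (adj'.counit.app b.obj)) := by
        rw [adj'.right_triangle_components]; exact IsIso.id _
      exact IsIso.of_isIso_comp_right (adj'.unit.app (c.lift.obj b.obj))
        (c.lift.map (adj'.counit.app b.obj))
    have h4' : adj'.unit.app X = ψ'.inv ≫ adj'.unit.app (c.lift.obj b.obj) ≫
        (Lbar ⋙ c.lift).map ψ'.hom := by
      have hn := adj'.unit.naturality ψ'.hom
      simp only [Functor.id_map] at hn
      rw [← hn, ← Category.assoc, ψ'.inv_hom_id, Category.id_comp]
    rw [h4']
    infer_instance
  tfae_have 1 ↔ 2 := e12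
  tfae_have 2 ↔ 5 := e25
  tfae_have 5 → 4 := i54
  tfae_have 4 → 5 := fun h4 a => h4 _ (hfreeproj a)
  tfae_have 2 → 3 := fun h2 => i23 h2 (i54 (e25.mp h2))
  tfae_have 3 → 4 := i34
  tfae_finish


end Paper
end

section
/- Let B be a category admitting equalisers, G = (G, δ, ε) a comonad on a category A, and F : B → A a left G-comodule functor with right adjoint R. Then the right adjoint R̄ : A^G → B of the lifted functor F̄ : B → A^G restricts to a functor R̄' : Inj(U^G, A^G) → Inj(F, B); that is, if (a, θ_a) ∈ A^G is U^G-injective, then R̄(a, θ_a) is an F-injective object of B. -/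
open CategoryTheory CategoryTheory.Limits

namespace Paper

variable {A : Type*} [Category A] {B : Type*} [Category B]

/-- **Proposition 1.6.**  Let `B` admit equalisers, `G` a comonad on `A`, and `F : B ⥤ A`
a left `G`-comodule functor with right adjoint `R`.  Then the right adjoint
`R̄ : A^G ⥤ B` of the lifted functor `F̄` restricts to a functor
`Inj(U^G, A^G) ⥤ Inj(F, B)`: it sends `U^G`-injective comodules to `F`-injective objects. -/
theorem statement2 [HasEqualizers B] (G : Comonad A) (F : B ⥤ A) (R : A ⥤ B)
    (adj : F ⊣ R) (c : ComoduleStruct G F)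
    (Rbar : G.Coalgebra ⥤ B) (adj' : c.lift ⊣ Rbar) :
    ∀ X : G.Coalgebra, FInjective G.forget X → FInjective F (Rbar.obj X) := by
  intro X hX b₁ b₂ f g hsplit
  obtain ⟨h, hh⟩ := hX (c.lift.map f) ((adj'.homEquiv b₁ X).symm g) hsplit
  refine ⟨adj'.homEquiv b₂ X h, ?_⟩
  rw [← adj'.homEquiv_naturality_left f, hh, Equiv.apply_symm_apply]

end Paper
end

section
/- Let G = (G, δ, ε) be a comonad on a category A and F : B → A a left G-comodule functor with right adjoint R, lifted functor F̄ : B → A^G and comonad morphism t : FR → G. Suppose that for every object b ∈ B the component t_{F(b)} : FR(F(b)) → G(F(b)) is an isomorphism. Then F̄ restricts to a functor F̄' : Inj(F, B) → Inj(U^G, A^G); that is, F̄ sends F-injective objects of B to U^G-injective G-comodules. -/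
open CategoryTheory CategoryTheory.Limits

namespace Paper

variable {A : Type*} [Category A] {B : Type*} [Category B]

@[simp] lemma ComoduleStruct.lift_obj_A' {G : Comonad A} {F : B ⥤ A} (c : ComoduleStruct G F)
    (b : B) : (c.lift.obj b).A = F.obj b := rfl

@[simp] lemma ComoduleStruct.lift_obj_a' {G : Comonad A} {F : B ⥤ A} (c : ComoduleStruct G F)
    (b : B) : (c.lift.obj b).a = c.β.app b := rfl

@[simp] lemma ComoduleStruct.lift_map_f' {G : Comonad A} {F : B ⥤ A} (c : ComoduleStruct G F)
    {b b' : B} (f : b ⟶ b') : (c.lift.map f).f = F.map f := rfl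

/-- **Proposition 1.7.**  Let `G` be a comonad on `A` and `F : B ⥤ A` a left `G`-comodule
functor with right adjoint `R` and comonad morphism `t : FR ⟶ G`.  If `t_{F(b)}` is an
isomorphism for every `b : B`, then the lifted functor `F̄` sends `F`-injective objects of
`B` to `U^G`-injective `G`-comodules. -/
theorem statement3 (G : Comonad A) (F : B ⥤ A) (R : A ⥤ B)
    (adj : F ⊣ R) (c : ComoduleStruct G F)
    (ht : ∀ b : B, IsIso ((c.galoisHom R adj).app (F.obj b))) :
    ∀ b : B, FInjective F b → FInjective G.forget (c.lift.obj b) := by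
  intro b hb X₁ X₂ f g hf
  haveI := hf
  set p : X₂.A ⟶ X₁.A := @retraction _ _ _ _ (G.forget.map f) hf with hpdef
  have hp : f.f ≫ p = 𝟙 X₁.A := @IsSplitMono.id _ _ _ _ (G.forget.map f) hf
  -- b is a retract of R (F b) by F-injectivity
  have hsm : IsSplitMono (F.map (adj.unit.app b)) :=
    IsSplitMono.mk' ⟨adj.counit.app (F.obj b), adj.left_triangle_components b⟩
  obtain ⟨h₀, hh₀⟩ := hb (adj.unit.app b) (𝟙 b) hsm
  set t := (c.galoisHom R adj).app (F.obj b) with htdef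
  haveI : IsIso t := ht b
  have ht_eq : t = c.β.app (R.obj (F.obj b)) ≫ (G : A ⥤ A).map (adj.counit.app (F.obj b)) := by
    simp [htdef, ComoduleStruct.galoisHom]
  -- t is a coalgebra morphism from F̄(RFb) to the cofree coalgebra on F b
  have w : (c.lift.obj (R.obj (F.obj b))).a ≫ (G : A ⥤ A).map t
      = t ≫ (G.cofree.obj (F.obj b)).a := by
    change c.β.app _ ≫ G.map t = t ≫ G.δ.app (F.obj b)
    rw [ht_eq, Functor.map_comp, ← Category.assoc, ← c.coassoc (R.obj (F.obj b))]
    simp only [Category.assoc]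
    have hδ := G.δ.naturality (adj.counit.app (F.obj b))
    dsimp at hδ
    rw [hδ]
  let e : c.lift.obj (R.obj (F.obj b)) ≅ G.cofree.obj (F.obj b) :=
    Comonad.Coalgebra.isoMk (asIso t : (R ⋙ F).obj (F.obj b) ≅ G.obj (F.obj b)) w
  -- transpose of p ≫ g.f through the cofree adjunction
  let h₁ : X₂ ⟶ G.cofree.obj (F.obj b) :=
    { f := X₂.a ≫ (G : A ⥤ A).map (p ≫ g.f)
      h := by
        have hn := G.δ.naturality (p ≫ g.f)
        simp only [Functor.comp_map] at hn
        change X₂.a ≫ G.map (X₂.a ≫ G.map (p ≫ g.f)) = (X₂.a ≫ G.map (p ≫ g.f)) ≫ G.δ.app (c.lift.obj b).A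
        rw [Category.assoc, hn, ← Category.assoc, X₂.coassoc, Category.assoc, Functor.map_comp] }
  refine ⟨h₁ ≫ e.inv ≫ c.lift.map h₀, ?_⟩
  -- key: β_b ≫ t⁻¹ = F η_b
  have hnat := c.β.naturality (adj.unit.app b)
  dsimp at hnat
  have key : F.map (adj.unit.app b) ≫ t = c.β.app b := by
    rw [ht_eq, ← Category.assoc, hnat, Category.assoc, ← Functor.map_comp]
    simp
  have key' : c.β.app b ≫ inv t = F.map (adj.unit.app b) := by
    rw [← key]; simp
  have hgh := g.h
  change X₁.a ≫ G.map g.f = g.f ≫ c.β.app b at hgh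
  ext
  dsimp [h₁, e]
  haveI : @IsIso A _ ((R ⋙ F).obj (F.obj b)) (G.obj (c.lift.obj b).A) t := ht b
  calc f.f ≫ (X₂.a ≫ (G : A ⥤ A).map (p ≫ g.f)) ≫ inv t ≫ F.map h₀
      = (X₁.a ≫ (G : A ⥤ A).map f.f ≫ (G : A ⥤ A).map (p ≫ g.f)) ≫ inv t ≫ F.map h₀ := by
        simp only [← Category.assoc]
        rw [f.h]
    _ = (X₁.a ≫ (G : A ⥤ A).map g.f) ≫ inv t ≫ F.map h₀ := by
        rw [← Functor.map_comp, ← Category.assoc f.f p, hp, Category.id_comp]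
    _ = g.f ≫ c.β.app b ≫ inv t ≫ F.map h₀ := by
        rw [hgh]; exact Category.assoc _ _ _
    _ = g.f ≫ F.map (adj.unit.app b) ≫ F.map h₀ := by
        erw [← Category.assoc (c.β.app b), key']; rfl
    _ = @id (X₁.A ⟶ F.obj b) g.f := by
        erw [← F.map_comp, hh₀, F.map_id]; exact Category.comp_id _

end Paper
end

section
/- Let B be a category admitting equalisers, G = (G, δ, ε) a comonad on a category A, and F : B → A a left G-comodule functor with right adjoint R, lifted functor F̄ : B → A^G with right adjoint R̄, and comonad morphism t : FR → G. Suppose that for every object b ∈ B the component t_{F(b)} is an isomorphism. Then the restrictions F̄' : Inj(F, B) → Inj(U^G, A^G) and R̄' : Inj(U^G, A^G) → Inj(F, B) form an adjunction F̄' ⊣ R̄' whose unit is an isomorphism; hence Inj(F, B) is (isomorphic to) a coreflective subcategory of Inj(U^G, A^G). -/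
open CategoryTheory CategoryTheory.Limits

namespace Paper

variable {A : Type*} [Category A] {B : Type*} [Category B]

theorem ComoduleStruct.galoisHom_app {G : Comonad A} {F : B ⥤ A} (c : ComoduleStruct G F)
    (R : A ⥤ B) (adj : F ⊣ R) (a : A) :
    (c.galoisHom R adj).app a = c.β.app (R.obj a) ≫ (G : A ⥤ A).map (adj.counit.app a) := by
  simp [ComoduleStruct.galoisHom]

/-- `t_a` as a morphism of coalgebras `F̄(R a) ⟶ φ^G a`. -/
@[simps]
def ComoduleStruct.galoisCoalgHom {G : Comonad A} {F : B ⥤ A} (c : ComoduleStruct G F)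
    (R : A ⥤ B) (adj : F ⊣ R) (a : A) : c.lift.obj (R.obj a) ⟶ G.cofree.obj a where
  f := (c.galoisHom R adj).app a
  h := by
    rw [c.galoisHom_app R adj a]
    show c.β.app (R.obj a) ≫ (G : A ⥤ A).map (c.β.app (R.obj a) ≫ (G : A ⥤ A).map (adj.counit.app a))
      = (c.β.app (R.obj a) ≫ (G : A ⥤ A).map (adj.counit.app a)) ≫ G.δ.app a
    have hδ := G.δ.naturality (adj.counit.app a)
    simp only [Functor.id_obj, Functor.comp_obj, Functor.comp_map] at hδ
    rw [Category.assoc, hδ, ← Category.assoc, c.coassoc (R.obj a), Category.assoc,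
      Functor.map_comp]

theorem fInjective_of_retract {F : B ⥤ A} {x y : B} (i : x ⟶ y) (r : y ⟶ x)
    (hir : i ≫ r = 𝟙 x) (hy : FInjective F y) : FInjective F x := by
  intro b1 b2 f g hf
  obtain ⟨h, hh⟩ := hy f (g ≫ i) hf
  exact ⟨h ≫ r, by rw [← Category.assoc, hh, Category.assoc, hir, Category.comp_id]⟩

theorem fInjective_rightAdjoint {C : Type*} [Category C] {L : B ⥤ C} {R : C ⥤ B}
    (adj : L ⊣ R) (a : C) : FInjective L (R.obj a) := by
  intro b1 b2 f g hf
  refine ⟨(adj.homEquiv b2 a) (retraction (L.map f) ≫ (adj.homEquiv b1 a).symm g), ?_⟩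
  rw [← Adjunction.homEquiv_naturality_left, ← Category.assoc, IsSplitMono.id,
    Category.id_comp, Equiv.apply_symm_apply]

theorem isIso_unit_of_retract {C : Type*} [Category C] {L : B ⥤ C} {R : C ⥤ B}
    (adj : L ⊣ R) {x y : B} (i : x ⟶ y) (r : y ⟶ x) (hir : i ≫ r = 𝟙 x)
    (hy : IsIso (adj.unit.app y)) : IsIso (adj.unit.app x) := by
  have h1 := adj.unit.naturality i
  have h2 := adj.unit.naturality r
  simp only [Functor.id_map, Functor.comp_map] at h1 h2
  refine ⟨R.map (L.map i) ≫ inv (adj.unit.app y) ≫ r, ?_, ?_⟩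
  · rw [← Category.assoc, ← h1, Category.assoc, IsIso.hom_inv_id_assoc, hir]
    rfl
  · rw [Category.assoc, Category.assoc, h2, IsIso.inv_hom_id_assoc, ← Functor.map_comp, ← Functor.map_comp, hir]
    simp

theorem isIso_comparison {C : Type*} [Category C] {L : B ⥤ C} {R1 R2 : C ⥤ B}
    (adj1 : L ⊣ R1) (adj2 : L ⊣ R2) (a : C) :
    IsIso (adj2.unit.app (R1.obj a) ≫ R2.map (adj1.counit.app a)) := by
  have hn := (Adjunction.rightAdjointUniq adj2 adj1).hom.naturality (adj1.counit.app a)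
  simp only [Functor.id_obj, Functor.comp_obj] at hn
  have h := adj2.unit.naturality ((Adjunction.rightAdjointUniq adj2 adj1).hom.app a)
  simp only [Functor.id_map, Functor.comp_map, Functor.id_obj, Functor.comp_obj] at h
  refine ⟨(Adjunction.rightAdjointUniq adj2 adj1).hom.app a, ?_, ?_⟩
  · rw [Category.assoc, hn, ← Category.assoc,
      Adjunction.unit_rightAdjointUniq_hom_app adj2 adj1 (R1.obj a)]
    simpa using adj1.right_triangle_components a
  · rw [← Category.assoc, h, Category.assoc, ← Functor.map_comp,
      Adjunction.rightAdjointUniq_hom_app_counit adj2 adj1 a]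
    simpa using adj2.right_triangle_components a



/-- **Proposition 1.9.**  Let `B` admit equalisers, `G` a comonad on `A`, `F : B ⥤ A` a
left `G`-comodule functor with right adjoint `R`, lifted functor `F̄` with right adjoint
`R̄`, and comonad morphism `t : FR ⟶ G`.  If `t_{F(b)}` is an isomorphism for every `b`,
then `F̄` and `R̄` restrict to functors `F̄' : Inj(F,B) ⥤ Inj(U^G,A^G)` and
`R̄' : Inj(U^G,A^G) ⥤ Inj(F,B)` forming an adjunction `F̄' ⊣ R̄'` whose unit is an
isomorphism; hence `Inj(F, B)` is (isomorphic to) a coreflective subcategory of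
`Inj(U^G, A^G)`. -/
theorem statement5 [HasEqualizers B] (G : Comonad A) (F : B ⥤ A) (R : A ⥤ B)
    (adj : F ⊣ R) (c : ComoduleStruct G F)
    (Rbar : G.Coalgebra ⥤ B) (adj' : c.lift ⊣ Rbar)
    (ht : ∀ b : B, IsIso ((c.galoisHom R adj).app (F.obj b))) :
    ∃ (hF : ∀ b : B, FInjective F b → FInjective G.forget (c.lift.obj b))
      (hR : ∀ X : G.Coalgebra, FInjective G.forget X → FInjective F (Rbar.obj X))
      (adj'' : ObjectProperty.lift (FInjective G.forget)
            (ObjectProperty.ι (FInjective F) ⋙ c.lift)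
            (fun X => hF X.obj X.property) ⊣
          ObjectProperty.lift (FInjective F)
            (ObjectProperty.ι (FInjective G.forget) ⋙ Rbar)
            (fun X => hR X.obj X.property)),
      IsIso adj''.unit ∧
        ∀ b : ObjectProperty.FullSubcategory (FInjective F), (adj''.unit.app b).hom = adj'.unit.app b.obj := by
  -- a retraction of the unit at every `F`-injective object
  have hp : ∀ b : B, FInjective F b → ∃ p : R.obj (F.obj b) ⟶ b, adj.unit.app b ≫ p = 𝟙 b := by
    intro b hb
    have hsm : IsSplitMono (F.map (adj.unit.app b)) :=
      IsSplitMono.mk' ⟨adj.counit.app (F.obj b), adj.left_triangle_components b⟩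
    exact hb (adj.unit.app b) (𝟙 b) hsm
  -- `τ_{F b}` is an isomorphism of coalgebras
  have hτiso : ∀ b : B, IsIso (c.galoisCoalgHom R adj (F.obj b)) := by
    intro b
    haveI : IsIso ((c.galoisCoalgHom R adj (F.obj b)).f) := ht b
    exact Comonad.coalgebra_iso_of_iso G _
  -- the lift of an `F`-injective object is `U^G`-injective
  have hF : ∀ b : B, FInjective F b → FInjective G.forget (c.lift.obj b) := by
    intro b hb
    obtain ⟨p, hp'⟩ := hp b hb
    haveI := hτiso b
    refine fInjective_of_retract
      (c.lift.map (adj.unit.app b) ≫ c.galoisCoalgHom R adj (F.obj b))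
      (inv (c.galoisCoalgHom R adj (F.obj b)) ≫ c.lift.map p) ?_
      (fInjective_rightAdjoint G.adj (F.obj b))
    rw [Category.assoc, IsIso.hom_inv_id_assoc, ← Functor.map_comp, hp',
      CategoryTheory.Functor.map_id]
  -- `R̄` of a `U^G`-injective coalgebra is `F`-injective
  have hR : ∀ X : G.Coalgebra, FInjective G.forget X → FInjective F (Rbar.obj X) := by
    intro X hX
    have hsm : IsSplitMono (G.forget.map (G.adj.unit.app X)) := by
      refine IsSplitMono.mk' ⟨G.ε.app X.A, ?_⟩
      show (G.adj.unit.app X).f ≫ G.ε.app X.A = 𝟙 _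
      simp [Comonad.adj_unit, X.counit]
      exact X.counit
    obtain ⟨q, hq⟩ := hX (G.adj.unit.app X) (𝟙 X) hsm
    exact fInjective_of_retract (Rbar.map (G.adj.unit.app X)) (Rbar.map q)
      (by rw [← Functor.map_comp, hq, CategoryTheory.Functor.map_id])
      (fInjective_rightAdjoint (adj'.comp G.adj) X.A)
  -- comparison of the units
  have hτ : ∀ a : A, c.galoisCoalgHom R adj a =
      G.adj.unit.app (c.lift.obj (R.obj a)) ≫ G.cofree.map (adj.counit.app a) := by
    intro a
    ext
    simp [Comonad.adj_unit, c.galoisHom_app]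
    rfl
  have hχ : ∀ a : A, adj'.unit.app (R.obj a) ≫ Rbar.map (c.galoisCoalgHom R adj a) =
      (adj'.comp G.adj).unit.app (R.obj a) ≫ (G.cofree ⋙ Rbar).map (adj.counit.app a) := by
    intro a
    rw [Adjunction.comp_unit_app, Category.assoc, hτ a, Functor.map_comp]
    rfl
  -- the unit of `adj'` is an isomorphism at every `F`-injective object
  have hunit : ∀ b : B, FInjective F b → IsIso (adj'.unit.app b) := by
    intro b hb
    obtain ⟨p, hp'⟩ := hp b hb
    haveI := hτiso b
    haveI h1 : IsIso (adj'.unit.app (R.obj (F.obj b))) := by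
      haveI h2 := isIso_comparison adj (adj'.comp G.adj) (F.obj b)
      have h3 : adj'.unit.app (R.obj (F.obj b)) =
          ((adj'.comp G.adj).unit.app (R.obj (F.obj b)) ≫
            (G.cofree ⋙ Rbar).map (adj.counit.app (F.obj b))) ≫
            inv (Rbar.map (c.galoisCoalgHom R adj (F.obj b))) := by
        rw [← hχ (F.obj b), Category.assoc, IsIso.hom_inv_id, Category.comp_id]
      rw [h3]
      exact IsIso.comp_isIso' h2 inferInstance
    exact isIso_unit_of_retract adj' (adj.unit.app b) p hp' h1
  -- the restricted adjunction
  let adjK : ObjectProperty.lift (FInjective G.forget)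
        (ObjectProperty.ι (FInjective F) ⋙ c.lift)
        (fun X => hF X.obj X.property) ⊣
      ObjectProperty.lift (FInjective F)
        (ObjectProperty.ι (FInjective G.forget) ⋙ Rbar)
        (fun X => hR X.obj X.property) :=
    Adjunction.mkOfHomEquiv
      { homEquiv := fun X Y =>
          { toFun := fun f => ObjectProperty.homMk (adj'.homEquiv X.obj Y.obj f.hom)
            invFun := fun g => ObjectProperty.homMk ((adj'.homEquiv X.obj Y.obj).symm g.hom)
            left_inv := fun f => by
              ext : 1; exact (adj'.homEquiv X.obj Y.obj).symm_apply_apply f.hom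
            right_inv := fun g => by
              ext; exact (adj'.homEquiv X.obj Y.obj).apply_symm_apply g.hom }
        homEquiv_naturality_left_symm := fun f g => by
          ext : 1; exact adj'.homEquiv_naturality_left_symm f.hom g.hom
        homEquiv_naturality_right := fun f g => by
          ext; exact adj'.homEquiv_naturality_right f.hom g.hom }
  have hcomp : ∀ b : ObjectProperty.FullSubcategory (FInjective F),
      (adjK.unit.app b).hom = adj'.unit.app b.obj := by
    intro b
    show (adj'.homEquiv b.obj _) (𝟙 _) = adj'.unit.app b.obj
    rw [Adjunction.homEquiv_unit]
    simp
  refine ⟨hF, hR, adjK, ?_, hcomp⟩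
  haveI : ∀ b : ObjectProperty.FullSubcategory (FInjective F), IsIso (adjK.unit.app b) := by
    intro b
    obtain ⟨v, hv1, hv2⟩ := hunit b.obj b.property
    rw [← hcomp b] at hv1 hv2
    exact ⟨⟨ObjectProperty.homMk v, by ext; exact hv1, by ext; exact hv2⟩⟩
  exact NatIso.isIso_of_isIso_app _

end Paper
end

section
/- Let λ : TG → GT be an entwining from a monad T = (T, m, e) to a comonad G = (G, δ, ε) on a category A, and let T̂ be the lifting of T to A^G. Then the assignment K ↦ U^G(α_K), where α_K : T̂φ^G → φ^G is the left T̂-module structure on φ^G corresponding to K, yields a bijection between (i) functors K : A → (A^G)_{T̂} satisfying U_{T̂} ∘ K = φ^G, and (ii) left T-module structures α : TG → G on the functor G (i.e., α ∘ eG = id and α ∘ mG = α ∘ Tα) satisfying δ ∘ α = Gα ∘ λG ∘ Tδ. -/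
open CategoryTheory CategoryTheory.Limits

namespace Paper


variable {A : Type*} [Category A]

/-- An entwining (mixed distributive law) `λ : TG ⟶ GT` from a monad `T` to a comonad `G`. -/
structure Entwining (T : Monad A) (G : Comonad A) where
  lam : (G : A ⥤ A) ⋙ (T : A ⥤ A) ⟶ (T : A ⥤ A) ⋙ (G : A ⥤ A)
  comp_mul : ∀ a : A, T.μ.app ((G : A ⥤ A).obj a) ≫ lam.app a =
      (T : A ⥤ A).map (lam.app a) ≫ lam.app ((T : A ⥤ A).obj a) ≫
        (G : A ⥤ A).map (T.μ.app a)
  comp_unit : ∀ a : A, T.η.app ((G : A ⥤ A).obj a) ≫ lam.app a = (G : A ⥤ A).map (T.η.app a)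
  delta_comp : ∀ a : A, lam.app a ≫ G.δ.app ((T : A ⥤ A).obj a) =
      (T : A ⥤ A).map (G.δ.app a) ≫ lam.app ((G : A ⥤ A).obj a) ≫
        (G : A ⥤ A).map (lam.app a)
  eps_comp : ∀ a : A, lam.app a ≫ G.ε.app ((T : A ⥤ A).obj a) = (T : A ⥤ A).map (G.ε.app a)

namespace Entwining

variable {T : Monad A} {G : Comonad A} (E : Entwining T G)

lemma lam_natural {a b : A} (f : a ⟶ b) :
    (T : A ⥤ A).map ((G : A ⥤ A).map f) ≫ E.lam.app b =
      E.lam.app a ≫ (G : A ⥤ A).map ((T : A ⥤ A).map f) :=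
  E.lam.naturality f

/-- The value of the lifted comonad `Ĝ` on an object of `A_T`:
`Ĝ(a, h) = (G(a), G(h) ∘ λ_a)`. -/
@[simps]
def liftAlgebra (X : T.Algebra) : T.Algebra where
  A := (G : A ⥤ A).obj X.A
  a := E.lam.app X.A ≫ (G : A ⥤ A).map X.a
  unit := by
    rw [← Category.assoc, E.comp_unit, ← Functor.map_comp, X.unit]
    simp
  assoc := by
    calc T.μ.app ((G : A ⥤ A).obj X.A) ≫ E.lam.app X.A ≫ (G : A ⥤ A).map X.a
        = (T.μ.app ((G : A ⥤ A).obj X.A) ≫ E.lam.app X.A) ≫ (G : A ⥤ A).map X.a := by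
          rw [Category.assoc]
      _ = (T : A ⥤ A).map (E.lam.app X.A) ≫ E.lam.app ((T : A ⥤ A).obj X.A) ≫
            (G : A ⥤ A).map (T.μ.app X.A) ≫ (G : A ⥤ A).map X.a := by
          rw [E.comp_mul]; simp [Category.assoc]
      _ = (T : A ⥤ A).map (E.lam.app X.A) ≫ E.lam.app ((T : A ⥤ A).obj X.A) ≫
            (G : A ⥤ A).map ((T : A ⥤ A).map X.a) ≫ (G : A ⥤ A).map X.a := by
          rw [← Functor.map_comp, X.assoc, Functor.map_comp]
      _ = (T : A ⥤ A).map (E.lam.app X.A) ≫ (T : A ⥤ A).map ((G : A ⥤ A).map X.a) ≫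
            E.lam.app X.A ≫ (G : A ⥤ A).map X.a := by
          rw [← Category.assoc (E.lam.app ((T : A ⥤ A).obj X.A)), ← E.lam_natural X.a]
          simp [Category.assoc]
      _ = (T : A ⥤ A).map (E.lam.app X.A ≫ (G : A ⥤ A).map X.a) ≫
            E.lam.app X.A ≫ (G : A ⥤ A).map X.a := by
          rw [Functor.map_comp, Category.assoc]

/-- The lifting `Ĝ` of the comonad `G` to the Eilenberg–Moore category `A_T`
along the entwining `λ`. -/
@[simps]
def liftedComonad : Comonad (T.Algebra) where
  obj X := E.liftAlgebra X
  map {X Y} f :=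
    { f := (G : A ⥤ A).map f.f
      h := by
        simp only [liftAlgebra_a]
        calc (T : A ⥤ A).map ((G : A ⥤ A).map f.f) ≫ E.lam.app Y.A ≫ (G : A ⥤ A).map Y.a
            = (E.lam.app X.A ≫ (G : A ⥤ A).map ((T : A ⥤ A).map f.f)) ≫
                (G : A ⥤ A).map Y.a := by
              rw [← Category.assoc, E.lam_natural f.f]
          _ = E.lam.app X.A ≫ (G : A ⥤ A).map ((T : A ⥤ A).map f.f ≫ Y.a) := by
              rw [Category.assoc, ← Functor.map_comp]
          _ = E.lam.app X.A ≫ (G : A ⥤ A).map (X.a ≫ f.f) := by rw [f.h]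
          _ = (E.lam.app X.A ≫ (G : A ⥤ A).map X.a) ≫ (G : A ⥤ A).map f.f := by
              rw [Functor.map_comp, Category.assoc] }
  map_id X := by ext; exact (G : A ⥤ A).map_id X.A
  map_comp f g := by ext; exact (G : A ⥤ A).map_comp f.f g.f
  ε :=
    { app := fun X =>
        { f := G.ε.app X.A
          h := by
            change (T : A ⥤ A).map (G.ε.app X.A) ≫ X.a =
              (E.lam.app X.A ≫ (G : A ⥤ A).map X.a) ≫ G.ε.app X.A
            have hnat : (G : A ⥤ A).map X.a ≫ G.ε.app X.A =
                G.ε.app ((T : A ⥤ A).obj X.A) ≫ X.a := by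
              simpa using (G.ε.naturality X.a).symm
            rw [Category.assoc, hnat, ← Category.assoc, E.eps_comp] }
      naturality := fun X Y f => by ext; exact G.ε.naturality f.f }
  δ :=
    { app := fun X =>
        { f := G.δ.app X.A
          h := by
            dsimp
            calc (T : A ⥤ A).map (G.δ.app X.A) ≫ E.lam.app ((G : A ⥤ A).obj X.A) ≫
                  (G : A ⥤ A).map (E.lam.app X.A ≫ (G : A ⥤ A).map X.a)
                = (T : A ⥤ A).map (G.δ.app X.A) ≫ E.lam.app ((G : A ⥤ A).obj X.A) ≫
                    (G : A ⥤ A).map (E.lam.app X.A) ≫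
                    (G : A ⥤ A).map ((G : A ⥤ A).map X.a) := by
                  rw [Functor.map_comp]
              _ = (E.lam.app X.A ≫ G.δ.app ((T : A ⥤ A).obj X.A)) ≫
                    (G : A ⥤ A).map ((G : A ⥤ A).map X.a) := by
                  rw [E.delta_comp]; simp [Category.assoc]
              _ = E.lam.app X.A ≫ (G : A ⥤ A).map X.a ≫ G.δ.app X.A := by
                  have hnat : (G : A ⥤ A).map X.a ≫ G.δ.app X.A =
                      G.δ.app ((T : A ⥤ A).obj X.A) ≫
                        (G : A ⥤ A).map ((G : A ⥤ A).map X.a) := by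
                    simpa using (G.δ.naturality X.a).symm
                  rw [hnat, Category.assoc]
              _ = (E.lam.app X.A ≫ (G : A ⥤ A).map X.a) ≫ G.δ.app X.A := by
                  rw [Category.assoc] }
      naturality := fun X Y f => by ext; exact G.δ.naturality f.f }
  coassoc X := by ext; exact G.coassoc X.A
  left_counit X := by ext; exact G.left_counit X.A
  right_counit X := by ext; exact G.right_counit X.A


/-- The value of the lifted monad `T̂` on an object of `A^G`: `T̂(a, θ) = (T(a), λ_a ∘ T(θ))`. -/
@[simps]
def liftCoalgebra (X : G.Coalgebra) : G.Coalgebra where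
  A := (T : A ⥤ A).obj X.A
  a := (T : A ⥤ A).map X.a ≫ E.lam.app X.A
  counit := by
    rw [Category.assoc, E.eps_comp, ← Functor.map_comp, X.counit]
    simp
  coassoc := by
    calc ((T : A ⥤ A).map X.a ≫ E.lam.app X.A) ≫ G.δ.app ((T : A ⥤ A).obj X.A)
        = (T : A ⥤ A).map X.a ≫ (T : A ⥤ A).map (G.δ.app X.A) ≫
            E.lam.app ((G : A ⥤ A).obj X.A) ≫ (G : A ⥤ A).map (E.lam.app X.A) := by
          rw [Category.assoc, E.delta_comp]
      _ = (T : A ⥤ A).map (X.a ≫ G.δ.app X.A) ≫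
            E.lam.app ((G : A ⥤ A).obj X.A) ≫ (G : A ⥤ A).map (E.lam.app X.A) := by
          rw [Functor.map_comp, Category.assoc]
      _ = (T : A ⥤ A).map X.a ≫ (T : A ⥤ A).map ((G : A ⥤ A).map X.a) ≫
            E.lam.app ((G : A ⥤ A).obj X.A) ≫ (G : A ⥤ A).map (E.lam.app X.A) := by
          rw [X.coassoc, Functor.map_comp, Category.assoc]
      _ = (T : A ⥤ A).map X.a ≫ E.lam.app X.A ≫
            (G : A ⥤ A).map ((T : A ⥤ A).map X.a) ≫ (G : A ⥤ A).map (E.lam.app X.A) := by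
          rw [← Category.assoc ((T : A ⥤ A).map ((G : A ⥤ A).map X.a)), E.lam_natural X.a]
          simp only [Category.assoc]
      _ = ((T : A ⥤ A).map X.a ≫ E.lam.app X.A) ≫
            (G : A ⥤ A).map ((T : A ⥤ A).map X.a ≫ E.lam.app X.A) := by
          rw [Functor.map_comp]
          simp only [Category.assoc]


/-- The lifting of the endofunctor `T` to `A^G`. -/
@[simps]
def liftFunctorT : G.Coalgebra ⥤ G.Coalgebra where
  obj X := E.liftCoalgebra X
  map {X Y} f :=
    { f := (T : A ⥤ A).map f.f
      h := by
        simp only [liftCoalgebra_a]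
        calc ((T : A ⥤ A).map X.a ≫ E.lam.app X.A) ≫ (G : A ⥤ A).map ((T : A ⥤ A).map f.f)
            = (T : A ⥤ A).map X.a ≫ E.lam.app X.A ≫
                (G : A ⥤ A).map ((T : A ⥤ A).map f.f) := by rw [Category.assoc]
          _ = (T : A ⥤ A).map X.a ≫ (T : A ⥤ A).map ((G : A ⥤ A).map f.f) ≫
                E.lam.app Y.A := by rw [← E.lam_natural f.f]
          _ = (T : A ⥤ A).map (X.a ≫ (G : A ⥤ A).map f.f) ≫ E.lam.app Y.A := by
              rw [Functor.map_comp, Category.assoc]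
          _ = (T : A ⥤ A).map (f.f ≫ Y.a) ≫ E.lam.app Y.A := by rw [f.h]
          _ = (T : A ⥤ A).map f.f ≫ (T : A ⥤ A).map Y.a ≫ E.lam.app Y.A := by
              rw [Functor.map_comp, Category.assoc] }
  map_id X := by ext; exact (T : A ⥤ A).map_id X.A
  map_comp f g := by ext; exact (T : A ⥤ A).map_comp f.f g.f

/-- The unit of the lifted monad. -/
@[simps]
def liftEta : 𝟭 (G.Coalgebra) ⟶ E.liftFunctorT where
  app X :=
    { f := T.η.app X.A
      h := by
        change X.a ≫ (G : A ⥤ A).map (T.η.app X.A) =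
          T.η.app X.A ≫ ((T : A ⥤ A).map X.a ≫ E.lam.app X.A)
        have hnat : X.a ≫ T.η.app ((G : A ⥤ A).obj X.A) =
            T.η.app X.A ≫ (T : A ⥤ A).map X.a := by
          simpa using T.η.naturality X.a
        rw [← Category.assoc, ← hnat, Category.assoc, E.comp_unit] }
  naturality X Y f := by
    ext
    show f.f ≫ T.η.app Y.A = T.η.app X.A ≫ (T : A ⥤ A).map f.f
    simpa using T.η.naturality f.f

/-- The multiplication of the lifted monad. -/
@[simps]
def liftMu : E.liftFunctorT ⋙ E.liftFunctorT ⟶ E.liftFunctorT where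
  app X :=
    { f := T.μ.app X.A
      h := by
        dsimp
        have hnat : (T : A ⥤ A).map ((T : A ⥤ A).map X.a) ≫
              T.μ.app ((G : A ⥤ A).obj X.A) = T.μ.app X.A ≫ (T : A ⥤ A).map X.a := by
          simpa using T.μ.naturality X.a
        calc ((T : A ⥤ A).map ((T : A ⥤ A).map X.a ≫ E.lam.app X.A) ≫
                E.lam.app ((T : A ⥤ A).obj X.A)) ≫ (G : A ⥤ A).map (T.μ.app X.A)
            = (T : A ⥤ A).map ((T : A ⥤ A).map X.a) ≫
                ((T : A ⥤ A).map (E.lam.app X.A) ≫ E.lam.app ((T : A ⥤ A).obj X.A) ≫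
                  (G : A ⥤ A).map (T.μ.app X.A)) := by
              rw [Functor.map_comp]
              simp only [Category.assoc]
          _ = (T : A ⥤ A).map ((T : A ⥤ A).map X.a) ≫
                T.μ.app ((G : A ⥤ A).obj X.A) ≫ E.lam.app X.A := by
              rw [← E.comp_mul]
          _ = (T.μ.app X.A ≫ (T : A ⥤ A).map X.a) ≫ E.lam.app X.A := by
              rw [← Category.assoc, hnat]
          _ = T.μ.app X.A ≫ (T : A ⥤ A).map X.a ≫ E.lam.app X.A := by
              rw [Category.assoc] }
  naturality X Y f := by
    ext
    show (T : A ⥤ A).map ((T : A ⥤ A).map f.f) ≫ T.μ.app Y.A =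
      T.μ.app X.A ≫ (T : A ⥤ A).map f.f
    simpa using T.μ.naturality f.f

/-- The lifting `T̂` of the monad `T` to the Eilenberg–Moore category `A^G`
along the entwining `λ`. -/
def liftedMonad : Monad (G.Coalgebra) where
  toFunctor := E.liftFunctorT
  η := E.liftEta
  μ := E.liftMu
  assoc X := by ext; exact T.assoc X.A
  left_unit X := by ext; exact T.left_unit X.A
  right_unit X := by ext; exact T.right_unit X.A


end Entwining


namespace Entwining

variable {A : Type*} [Category A] {F : Monad A} {G : Comonad A} (E : Entwining F G)

/-- The canonical natural transformation assembling the structure morphisms of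
algebras over a monad. -/
@[simps]
def algStructNat {C : Type*} [Category C] (M : Monad C) :
    M.forget ⋙ (M : C ⥤ C) ⟶ M.forget where
  app X := X.a
  naturality X Y f := by exact f.h

/-- The left `T̂`-module structure `α_K : T̂φ^G ⟶ φ^G` on the cofree functor `φ^G`
corresponding to a functor `K : A ⥤ (A^G)_{T̂}` with `U_{T̂} ∘ K = φ^G`. -/
def structOfKMod (K : A ⥤ E.liftedMonad.Algebra)
    (hK : K ⋙ Monad.forget E.liftedMonad = G.cofree) :
    G.cofree ⋙ (E.liftedMonad : G.Coalgebra ⥤ G.Coalgebra) ⟶ G.cofree :=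
  Functor.whiskerRight (eqToHom hK.symm) (E.liftedMonad : G.Coalgebra ⥤ G.Coalgebra) ≫
    Functor.whiskerLeft K (algStructNat E.liftedMonad) ≫ eqToHom hK

/-- The underlying left `T`-module structure `α = U^G(α_K) : TG ⟶ G` on the functor `G`
induced by a functor `K` as above. -/
def inducedMod (K : A ⥤ E.liftedMonad.Algebra)
    (hK : K ⋙ Monad.forget E.liftedMonad = G.cofree) :
    (G : A ⥤ A) ⋙ (F : A ⥤ A) ⟶ (G : A ⥤ A) :=
  Functor.whiskerRight (E.structOfKMod K hK) G.forget

/-- The conditions on `α : TG ⟶ G` appearing in Proposition 2.1: `α` is a left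
`T`-module structure on `G` and the diagram `δ ∘ α = Gα ∘ λG ∘ Tδ` commutes. -/
def ModLaws (α : (G : A ⥤ A) ⋙ (F : A ⥤ A) ⟶ (G : A ⥤ A)) : Prop :=
  (∀ a : A, F.η.app ((G : A ⥤ A).obj a) ≫ α.app a = 𝟙 ((G : A ⥤ A).obj a)) ∧
  (∀ a : A, F.μ.app ((G : A ⥤ A).obj a) ≫ α.app a =
    (F : A ⥤ A).map (α.app a) ≫ α.app a) ∧
  (∀ a : A, α.app a ≫ G.δ.app a =
    (F : A ⥤ A).map (G.δ.app a) ≫ E.lam.app ((G : A ⥤ A).obj a) ≫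
      (G : A ⥤ A).map (α.app a))

end Entwining

namespace Entwining

variable {A : Type*} [Category A] {F : Monad A} {G : Comonad A} (E : Entwining F G)

/-- Carrier equality extracted from `hK`. -/
lemma coalgEq (K : A ⥤ E.liftedMonad.Algebra)
    (hK : K ⋙ Monad.forget E.liftedMonad = G.cofree) (a : A) :
    (K.obj a).A = G.cofree.obj a :=
  Functor.congr_obj hK a

lemma carrierEq (K : A ⥤ E.liftedMonad.Algebra)
    (hK : K ⋙ Monad.forget E.liftedMonad = G.cofree) (a : A) :
    ((K.obj a).A).A = (G : A ⥤ A).obj a :=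
  congrArg Comonad.Coalgebra.A (E.coalgEq K hK a)


lemma coalg_eqToHom_f {X Y : G.Coalgebra} (h : X = Y) :
    (eqToHom h).f = eqToHom (congrArg Comonad.Coalgebra.A h) := by
  cases h; rfl

lemma port_aux1 {X Y Z : A} (f : X ⟶ Y) (h1 : Y = Z) (h2 : Z = Y) :
    f = (f ≫ eqToHom h1) ≫ eqToHom h2 := by simp

lemma port_aux3 {V W X Y Z : A} (e : V ⟶ W) (f : W ⟶ X) (h1 : X = Y) (h2 : Y = Z)
    (h3 : X = Z) : e ≫ (f ≫ eqToHom h1) ≫ eqToHom h2 = e ≫ f ≫ eqToHom h3 := by simp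

lemma port_aux4 {X X' R S Y Y' : A} (g : R ⟶ S) (p1 : X = R) (q1 : S = Y) (p2 : X = X')
    (p3 : X' = R) (q3 : S = Y') (q2 : Y' = Y) :
    eqToHom p1 ≫ g ≫ eqToHom q1 = eqToHom p2 ≫ (eqToHom p3 ≫ g ≫ eqToHom q3) ≫ eqToHom q2 := by
  simp

lemma port_aux5 {W : A} {X Y Z : G.Coalgebra} (e : W ⟶ X.A) (f : X ⟶ Y) (h : Y = Z)
    (h' : Y.A = Z.A) : e ≫ (f ≫ eqToHom h).f = e ≫ f.f ≫ eqToHom h' := by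
  cases h; simp

lemma inducedMod_app (K : A ⥤ E.liftedMonad.Algebra)
    (hK : K ⋙ Monad.forget E.liftedMonad = G.cofree) (a : A) :
    (E.inducedMod K hK).app a =
      (F : A ⥤ A).map (eqToHom (E.carrierEq K hK a).symm) ≫ ((K.obj a).a).f ≫
        eqToHom (E.carrierEq K hK a) := by
  dsimp [inducedMod, structOfKMod]
  rw [eqToHom_app, eqToHom_app]
  simp only [eqToHom_map]
  simp only [Comonad.forget_map, Comonad.Coalgebra.comp_f, coalg_eqToHom_f, algStructNat_app]
  exact port_aux5 _ _ _ _


lemma structOfKMod_app (K : A ⥤ E.liftedMonad.Algebra)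
    (hK : K ⋙ Monad.forget E.liftedMonad = G.cofree) (a : A) :
    (E.structOfKMod K hK).app a =
      (E.liftedMonad : G.Coalgebra ⥤ G.Coalgebra).map
          (eqToHom (E.coalgEq K hK a).symm) ≫ (K.obj a).a ≫ eqToHom (E.coalgEq K hK a) := by
  dsimp [structOfKMod]
  rw [eqToHom_app, eqToHom_app]
  rfl

lemma inducedMod_app_eq_f (K : A ⥤ E.liftedMonad.Algebra)
    (hK : K ⋙ Monad.forget E.liftedMonad = G.cofree) (a : A) :
    (E.inducedMod K hK).app a = ((E.structOfKMod K hK).app a).f := rfl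

lemma structOfKMod_unit (K : A ⥤ E.liftedMonad.Algebra)
    (hK : K ⋙ Monad.forget E.liftedMonad = G.cofree) (a : A) :
    E.liftedMonad.η.app (G.cofree.obj a) ≫ (E.structOfKMod K hK).app a =
      𝟙 (G.cofree.obj a) := by
  rw [E.structOfKMod_app]
  have hnat := (E.liftedMonad.η.naturality (eqToHom (E.coalgEq K hK a).symm)).symm
  dsimp at hnat
  slice_lhs 1 2 => rw [hnat]
  slice_lhs 2 3 => rw [(K.obj a).unit]
  simp

lemma structOfKMod_mul (K : A ⥤ E.liftedMonad.Algebra)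
    (hK : K ⋙ Monad.forget E.liftedMonad = G.cofree) (a : A) :
    E.liftedMonad.μ.app (G.cofree.obj a) ≫ (E.structOfKMod K hK).app a =
      (E.liftedMonad : G.Coalgebra ⥤ G.Coalgebra).map ((E.structOfKMod K hK).app a) ≫
        (E.structOfKMod K hK).app a := by
  rw [E.structOfKMod_app]
  have hnat := E.liftedMonad.μ.naturality (eqToHom (E.coalgEq K hK a).symm)
  dsimp at hnat
  have hassoc := (K.obj a).assoc
  simp only [Functor.map_comp, Category.assoc]
  slice_lhs 1 2 => rw [← hnat]
  slice_lhs 2 3 => rw [hassoc]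
  simp [eqToHom_map]

lemma modLaws_induced (K : A ⥤ E.liftedMonad.Algebra)
    (hK : K ⋙ Monad.forget E.liftedMonad = G.cofree) :
    E.ModLaws (E.inducedMod K hK) := by
  refine ⟨fun a => ?_, fun a => ?_, fun a => ?_⟩
  · exact congrArg Comonad.Coalgebra.Hom.f (E.structOfKMod_unit K hK a)
  · exact congrArg Comonad.Coalgebra.Hom.f (E.structOfKMod_mul K hK a)
  · have h := ((E.structOfKMod K hK).app a).h
    dsimp [liftedMonad] at h
    change ((F : A ⥤ A).map (G.δ.app a) ≫ E.lam.app ((G : A ⥤ A).obj a)) ≫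
      (G : A ⥤ A).map ((E.structOfKMod K hK).app a).f = ((E.structOfKMod K hK).app a).f ≫ G.δ.app a at h
    rw [E.inducedMod_app_eq_f]
    exact h.symm.trans (Category.assoc _ _ _)

lemma algebra_eqToHom_f {C : Type*} [Category C] {M : Monad C} {X Y : M.Algebra}
    (h : X = Y) : (eqToHom h).f = eqToHom (congrArg Monad.Algebra.A h) := by
  cases h; rfl

lemma alg_ext {C : Type*} [Category C] {M : Monad C} {X Y : M.Algebra} (h : X.A = Y.A)
    (h2 : X.a = (M : C ⥤ C).map (eqToHom h) ≫ Y.a ≫ eqToHom h.symm) : X = Y := by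
  obtain ⟨XA, Xa, _, _⟩ := X
  obtain ⟨YA, Ya, _, _⟩ := Y
  dsimp at h
  subst h
  simp at h2
  subst h2
  rfl


/-- The `T̂`-algebra on `G(a)` built from a left module structure `α`. -/
@[simps]
def mkAlg (α : (G : A ⥤ A) ⋙ (F : A ⥤ A) ⟶ (G : A ⥤ A)) (hα : E.ModLaws α) (a : A) :
    E.liftedMonad.Algebra where
  A := G.cofree.obj a
  a :=
    { f := α.app a
      h := by
        dsimp [liftedMonad]
        change ((F : A ⥤ A).map (G.δ.app a) ≫ E.lam.app ((G : A ⥤ A).obj a)) ≫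
          (G : A ⥤ A).map (α.app a) = α.app a ≫ G.δ.app a
        rw [Category.assoc, ← (hα.2.2 a)] }
  unit := by
    ext
    exact hα.1 a
  assoc := by
    ext
    exact hα.2.1 a

/-- The functor `A ⥤ (A^G)_{T̂}` built from a left module structure `α`. -/
@[simps]
def mkFun (α : (G : A ⥤ A) ⋙ (F : A ⥤ A) ⟶ (G : A ⥤ A)) (hα : E.ModLaws α) :
    A ⥤ E.liftedMonad.Algebra where
  obj a := E.mkAlg α hα a
  map {a b} f :=
    { f := G.cofree.map f
      h := by
        ext
        show (F : A ⥤ A).map ((G : A ⥤ A).map f) ≫ α.app b = α.app a ≫ (G : A ⥤ A).map f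
        exact α.naturality f }
  map_id a := by ext; exact (G : A ⥤ A).map_id a
  map_comp f g := by ext; exact (G : A ⥤ A).map_comp f g

lemma mkFun_forget (α : (G : A ⥤ A) ⋙ (F : A ⥤ A) ⟶ (G : A ⥤ A)) (hα : E.ModLaws α) :
    E.mkFun α hα ⋙ Monad.forget E.liftedMonad = G.cofree := rfl

lemma inducedMod_mkFun (α : (G : A ⥤ A) ⋙ (F : A ⥤ A) ⟶ (G : A ⥤ A)) (hα : E.ModLaws α) :
    E.inducedMod (E.mkFun α hα) (E.mkFun_forget α hα) = α := by
  ext a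
  rw [E.inducedMod_app]
  show (F : A ⥤ A).map (eqToHom (rfl : (G : A ⥤ A).obj a = (G : A ⥤ A).obj a)) ≫
    α.app a ≫ eqToHom rfl = α.app a
  simp

lemma inducedMod_injective {K K' : A ⥤ E.liftedMonad.Algebra}
    {hK : K ⋙ Monad.forget E.liftedMonad = G.cofree}
    {hK' : K' ⋙ Monad.forget E.liftedMonad = G.cofree}
    (h : E.inducedMod K hK = E.inducedMod K' hK') : K = K' := by
  have hobj : ∀ a, K.obj a = K'.obj a := by
    intro a
    have hA : (K.obj a).A = (K'.obj a).A :=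
      (E.coalgEq K hK a).trans (E.coalgEq K' hK' a).symm
    refine alg_ext hA ?_
    have hf := congrArg (fun (τ : (G : A ⥤ A) ⋙ (F : A ⥤ A) ⟶ (G : A ⥤ A)) => τ.app a) h
    dsimp at hf
    rw [E.inducedMod_app, E.inducedMod_app] at hf
    apply Comonad.Coalgebra.Hom.ext
    show ((K.obj a).a).f = (E.liftedMonad.map (eqToHom hA) ≫ (K'.obj a).a ≫ eqToHom hA.symm).f
    have hs : ((K.obj a).a).f =
        (F : A ⥤ A).map (eqToHom (E.carrierEq K hK a)) ≫
          ((F : A ⥤ A).map (eqToHom (E.carrierEq K hK a).symm) ≫ ((K.obj a).a).f ≫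
            eqToHom (E.carrierEq K hK a)) ≫ eqToHom (E.carrierEq K hK a).symm := by
      simp [eqToHom_map]
      exact port_aux1 _ _ _
    rw [hs, hf]
    simp [liftedMonad, coalg_eqToHom_f, eqToHom_map]
    exact port_aux3 _ _ _ _ _
  refine CategoryTheory.Functor.ext hobj ?_
  intro a b f
  apply (Monad.forget E.liftedMonad).map_injective
  have h1 := Functor.congr_hom hK f
  have h2 := Functor.congr_hom hK' f
  dsimp at h1 h2
  show (K.map f).f = (eqToHom (hobj a) ≫ K'.map f ≫ eqToHom (hobj b).symm).f
  simp [h1, h2, algebra_eqToHom_f]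
  simp only [Monad.forget_map] at h1 h2
  rw [h1, h2]
  exact port_aux4 (A := G.Coalgebra) _ _ _ _ _ _ _


end Entwining

open Entwining in
/-- **Proposition 2.1.**  Let `λ : TG ⟶ GT` be an entwining from a monad `T` to a
comonad `G` on `A` and `T̂` the lifting of `T` to `A^G`.  The assignment
`K ↦ U^G(α_K)` yields a bijection between functors `K : A ⥤ (A^G)_{T̂}` with
`U_{T̂} ∘ K = φ^G` and left `T`-module structures `α : TG ⟶ G` on the functor `G`
satisfying `δ ∘ α = Gα ∘ λG ∘ Tδ`. -/
theorem statement6 {A : Type*} [Category A] (T : Monad A) (G : Comonad A)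
    (E : Entwining T G) :
    (∀ K : {K : A ⥤ E.liftedMonad.Algebra //
        K ⋙ Monad.forget E.liftedMonad = G.cofree},
      E.ModLaws (E.inducedMod K.1 K.2)) ∧
    Function.Injective
      (fun K : {K : A ⥤ E.liftedMonad.Algebra //
          K ⋙ Monad.forget E.liftedMonad = G.cofree} =>
        E.inducedMod K.1 K.2) ∧
    (∀ α : (G : A ⥤ A) ⋙ (T : A ⥤ A) ⟶ (G : A ⥤ A), E.ModLaws α →
      ∃ K : {K : A ⥤ E.liftedMonad.Algebra //
          K ⋙ Monad.forget E.liftedMonad = G.cofree},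
        E.inducedMod K.1 K.2 = α) := by
  exact ⟨fun K => E.modLaws_induced K.1 K.2,
    fun K K' h => Subtype.ext (E.inducedMod_injective h),
    fun α hα => ⟨⟨E.mkFun α hα, E.mkFun_forget α hα⟩, E.inducedMod_mkFun α hα⟩⟩

end Paper
end

section
/- Let i : C → A be a dense functor (C a small category), and let F, F' : A → B be functors having right adjoints U and U' respectively. Then a natural transformation τ : F → F' is an isomorphism if and only if the restricted natural transformation τi : Fi → F'i is an isomorphism. -/
open CategoryTheory

namespace Paper

universe v u w

variable {C : Type w} [SmallCategory C] {A : Type u} [Category.{v} A]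

/-- The restricted Yoneda functor `a ↦ Mor_A(i(−), a)` associated with `i : C ⥤ A`. -/
def restrictedYonedaAt (i : C ⥤ A) : A ⥤ (Cᵒᵖ ⥤ Type v) :=
  yoneda ⋙ (Functor.whiskeringLeft Cᵒᵖ Aᵒᵖ (Type v)).obj i.op

/-- A functor `i : C ⥤ A` with `C` small is dense if the restricted Yoneda functor
`a ↦ Mor_A(i(−), a)` is full and faithful. -/
def IsDense (i : C ⥤ A) : Prop :=
  (restrictedYonedaAt i).Full ∧ (restrictedYonedaAt i).Faithful

/-- **Lemma 2.4.**  Let `i : C ⥤ A` be a dense functor (`C` small) and let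
`F, F' : A ⥤ B` be functors with right adjoints `U` and `U'` respectively.  A natural
transformation `τ : F ⟶ F'` is an isomorphism if and only if `τi : Fi ⟶ F'i` is an
isomorphism. -/
theorem statement9 {B : Type*} [Category B] (i : C ⥤ A) (hi : IsDense i)
    (F F' : A ⥤ B) (U U' : B ⥤ A) (adj : F ⊣ U) (adj' : F' ⊣ U') (τ : F ⟶ F') :
    IsIso τ ↔ IsIso (Functor.whiskerLeft i τ) := by
  constructor
  · intro h
    infer_instance
  · intro h
    -- the conjugate (mate) natural transformation
    set σ : U' ⟶ U := conjugateEquiv adj' adj τ with hσ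
    haveI := hi.1
    haveI := hi.2
    -- each component of σ becomes an iso after applying the restricted Yoneda functor
    haveI : ∀ b : B, IsIso (σ.app b) := by
      intro b
      haveI : ∀ c : Cᵒᵖ, IsIso (((restrictedYonedaAt i).map (σ.app b)).app c) := by
        intro c
        rw [isIso_iff_bijective]
        haveI : IsIso (τ.app (i.obj c.unop)) :=
          inferInstanceAs (IsIso ((Functor.whiskerLeft i τ).app c.unop))
        have key : (⇑(((restrictedYonedaAt i).map (σ.app b)).app c) : (i.obj c.unop ⟶ U'.obj b) → (i.obj c.unop ⟶ U.obj b)) =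
            (adj.homEquiv (i.obj c.unop) b) ∘ (fun g => τ.app (i.obj c.unop) ≫ g) ∘
              (adj'.homEquiv (i.obj c.unop) b).symm := by
          funext (f : i.obj c.unop ⟶ U'.obj b)
          change f ≫ σ.app b = adj.homEquiv _ _ (τ.app (i.obj c.unop) ≫ (adj'.homEquiv _ _).symm f)
          simp only [restrictedYonedaAt, Function.comp_apply, Functor.comp_map,
            Functor.whiskeringLeft_obj_map, Functor.whiskerLeft_app, yoneda_map_app, Functor.op_obj,
            Adjunction.homEquiv_counit, Adjunction.homEquiv_unit]
          have hnat : τ.app (i.obj c.unop) ≫ F'.map f ≫ adj'.counit.app b =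
              F.map f ≫ τ.app (U'.obj b) ≫ adj'.counit.app b := by
            rw [← Category.assoc, ← τ.naturality, Category.assoc]
          rw [hnat]
          simp only [Functor.map_comp]
          have hu : adj.unit.app (i.obj c.unop) ≫ U.map (F.map f) =
              f ≫ adj.unit.app (U'.obj b) := by
            have := (adj.unit.naturality f).symm
            simp only [Functor.comp_map, Functor.id_map] at this
            exact this
          rw [← Category.assoc, ← Category.assoc, hu]
          have happ : σ.app b = adj.unit.app (U'.obj b) ≫ U.map (τ.app (U'.obj b)) ≫
              U.map (adj'.counit.app b) := by
            rw [hσ]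
            simp [conjugateEquiv, mateEquiv]
          rw [happ]
          simp
        rw [key]
        have hmid : Function.Bijective
            (fun g : F'.obj (i.obj c.unop) ⟶ b => τ.app (i.obj c.unop) ≫ g) := by
          constructor
          · intro g₁ g₂ hg
            exact (cancel_epi (τ.app (i.obj c.unop))).mp hg
          · intro g
            exact ⟨inv (τ.app (i.obj c.unop)) ≫ g, by simp⟩
        exact ((adj.homEquiv (i.obj c.unop) b).bijective.comp
          (hmid.comp (adj'.homEquiv (i.obj c.unop) b).symm.bijective))
      haveI : IsIso ((restrictedYonedaAt i).map (σ.app b)) :=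
        NatIso.isIso_of_isIso_app _
      exact isIso_of_reflects_iso (σ.app b) (restrictedYonedaAt i)
    haveI : IsIso σ := NatIso.isIso_of_isIso_app σ
    exact conjugateEquiv_of_iso adj' adj τ

end Paper
end
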